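/- arXiv:2011.06114 — 7 statements merged into one kernel-verified Lean document; each statement's English description precedes it below -/
import Mathlib

section
/- Let P ⊆ ℝ^k be a large-enough bounded convex polytope, W = P ∩ ℤ^k, and let C be a GKZ chamber. Set C_P = ⋂_{p∈P} (p + C). Then the window skeleton and the GIT skeleton agree over C_P: Λ_W ∩ (μ⁻¹(C_P) × ℝ^N) = Λ_C ∩ (μ⁻¹(C_P) × ℝ^N), where the first factor is the base point of the pair (x,ξ). (Theorem: no quasi-symmetry is needed.) -/
open Pointwise
open scoped Classical

noncomputable section

/-- The conical Lagrangian `Λ₀ = SS(ℂ_{ℝ^N_{>0}})` over the origin. -/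
def Lambda0 (N : ℕ) : Set ((Fin N → ℝ) × (Fin N → ℝ)) :=
  {p | ∀ i, (0 < p.1 i ∧ p.2 i = 0) ∨ (p.1 i = 0 ∧ p.2 i ≤ 0)}

/-- The translated conical Lagrangian `Λ_w` for `w ∈ ℤ^N`. -/
def Lambdaw {N : ℕ} (w : Fin N → ℤ) : Set ((Fin N → ℝ) × (Fin N → ℝ)) :=
  {p | ((fun i => p.1 i - (w i : ℝ)), p.2) ∈ Lambda0 N}

/-- The window skeleton `Λ_W = ⋃ {Λ_w : w ∈ ℤ^N, μ(w) ∈ W}`. -/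
def LambdaWin {N k : ℕ} (μ : (Fin N → ℝ) →ₗ[ℝ] (Fin k → ℝ)) (W : Set (Fin k → ℝ)) :
    Set ((Fin N → ℝ) × (Fin N → ℝ)) :=
  ⋃ (w : Fin N → ℤ) (_ : μ (fun i => (w i : ℝ)) ∈ W), Lambdaw w

/-- The cone `τ_I` generated by the standard basis vectors `e_i`, `i ∈ I`. -/
def tauCone {N : ℕ} (I : Set (Fin N)) : Set (Fin N → ℝ) :=
  {x | ∀ i, 0 ≤ x i ∧ (i ∉ I → x i = 0)}

/-- The relative interior of `τ_I`. -/
def tauRelInt {N : ℕ} (I : Set (Fin N)) : Set (Fin N → ℝ) :=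
  {x | ∀ i, (i ∈ I → 0 < x i) ∧ (i ∉ I → x i = 0)}

/-- The complement of the union of the boundaries `∂C_I`, `C_I = μ(τ_I)`. -/
def gkzGood {N k : ℕ} (μ : (Fin N → ℝ) →ₗ[ℝ] (Fin k → ℝ)) : Set (Fin k → ℝ) :=
  {y | ∀ I : Set (Fin N), y ∉ frontier (μ '' tauCone I)}

/-- A GKZ chamber: a connected component of `ℝ^k ∖ ⋃_I ∂C_I`. -/
def IsGKZChamber {N k : ℕ} (μ : (Fin N → ℝ) →ₗ[ℝ] (Fin k → ℝ))
    (C : Set (Fin k → ℝ)) : Prop :=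
  ∃ x ∈ gkzGood μ, C = connectedComponentIn (gkzGood μ) x

/-- `ℐ_C = {I : μ⁻¹(C) ∩ relint(τ_I) ≠ ∅}`. -/
def chamberIdx {N k : ℕ} (μ : (Fin N → ℝ) →ₗ[ℝ] (Fin k → ℝ))
    (C : Set (Fin k → ℝ)) : Set (Set (Fin N)) :=
  {I | ((μ ⁻¹' C) ∩ tauRelInt I).Nonempty}

/-- The GIT (FLTZ) skeleton `Λ_C = ⋃_{I ∈ ℐ_C} (ℤ^N + ℝ^I) × (−σ_{I^c})`. -/
def LambdaGIT {N k : ℕ} (μ : (Fin N → ℝ) →ₗ[ℝ] (Fin k → ℝ))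
    (C : Set (Fin k → ℝ)) : Set ((Fin N → ℝ) × (Fin N → ℝ)) :=
  ⋃ I ∈ chamberIdx μ C,
    {p | (∀ i, i ∉ I → ∃ n : ℤ, p.1 i = (n : ℝ)) ∧
         (∀ i ∈ I, p.2 i = 0) ∧ (∀ i, i ∉ I → p.2 i ≤ 0)}

section Aux

variable {N k : ℕ}

def coneOf {N k : ℕ} (β : Fin N → (Fin k → ℝ)) (I : Set (Fin N)) : Set (Fin k → ℝ) :=
  {v | ∃ t : Fin N → ℝ, (∀ i, 0 ≤ t i) ∧ (∀ i, i ∉ I → t i = 0) ∧ v = ∑ i, t i • β i}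

variable {N k : ℕ}

theorem mu_apply (μ : (Fin N → ℝ) →ₗ[ℝ] (Fin k → ℝ)) (β : Fin N → (Fin k → ℝ))
    (hβ : ∀ i, β i = μ (Pi.single i 1)) (x : Fin N → ℝ) :
    μ x = ∑ i, x i • β i := by
  have hx : x = ∑ i, x i • (Pi.single i 1 : Fin N → ℝ) := by
    ext j
    rw [Finset.sum_apply]
    simp [Pi.single_apply, Finset.sum_ite_eq', mul_comm]
  calc μ x = μ (∑ i, x i • (Pi.single i 1 : Fin N → ℝ)) := by rw [← hx]
    _ = ∑ i, x i • μ (Pi.single i 1) := by rw [map_sum]; simp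
    _ = ∑ i, x i • β i := by simp [hβ]

theorem image_tauCone (μ : (Fin N → ℝ) →ₗ[ℝ] (Fin k → ℝ)) (β : Fin N → (Fin k → ℝ))
    (hβ : ∀ i, β i = μ (Pi.single i 1)) (I : Set (Fin N)) :
    μ '' tauCone I = coneOf β I := by
  ext v
  constructor
  · rintro ⟨x, hx, rfl⟩
    exact ⟨x, fun i => (hx i).1, fun i hi => (hx i).2 hi, (mu_apply μ β hβ x)⟩
  · rintro ⟨t, ht0, htI, rfl⟩
    exact ⟨t, fun i => ⟨ht0 i, htI i⟩, (mu_apply μ β hβ t)⟩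

theorem sum_set_mem {ι α : Type*} [AddCommMonoid α] (s : Finset ι) (F : ι → Set α)
    (g : ι → α) (h : ∀ i ∈ s, g i ∈ F i) : ∑ i ∈ s, g i ∈ ∑ i ∈ s, F i := by
  classical
  induction s using Finset.cons_induction with
  | empty => simp
  | cons a s ha ih =>
      rw [Finset.sum_cons, Finset.sum_cons]
      exact Set.add_mem_add (h a (Finset.mem_cons_self a s))
        (ih fun i hi => h i (Finset.mem_cons_of_mem hi))

theorem chamber_subset_interior (μ : (Fin N → ℝ) →ₗ[ℝ] (Fin k → ℝ))
    (C : Set (Fin k → ℝ)) (hC : ∃ x ∈ gkzGood μ, C = connectedComponentIn (gkzGood μ) x)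
    {I : Set (Fin N)} (hI : ((μ ⁻¹' C) ∩ tauRelInt I).Nonempty) :
    C ⊆ interior (μ '' tauCone I) := by
  obtain ⟨x₀, hx₀, rfl⟩ := hC
  obtain ⟨z, hzC, hzrel⟩ := hI
  set S := μ '' tauCone I with hS
  have hzS : μ z ∈ S := by
    refine ⟨z, fun i => ⟨?_, (hzrel i).2⟩, rfl⟩
    by_cases hi : i ∈ I
    · exact le_of_lt ((hzrel i).1 hi)
    · rw [(hzrel i).2 hi]
  have hsub : connectedComponentIn (gkzGood μ) x₀ ⊆ gkzGood μ :=
    connectedComponentIn_subset _ _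
  have hUnion : connectedComponentIn (gkzGood μ) x₀ ⊆ interior S ∪ (closure S)ᶜ := by
    intro c hc
    have hcf : c ∉ frontier S := hsub hc I
    by_cases hcl : c ∈ closure S
    · left
      by_contra hint
      exact hcf ⟨hcl, hint⟩
    · right; exact hcl
  refine IsPreconnected.subset_left_of_subset_union isOpen_interior
    (isOpen_compl_iff.2 isClosed_closure) ?_ hUnion ⟨μ z, hzC, ?_⟩
    isPreconnected_connectedComponentIn
  · exact Set.disjoint_left.2 fun a ha hb => hb (interior_subset_closure ha)
  · have : μ z ∉ frontier S := hsub hzC I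
    by_contra hint
    exact this ⟨subset_closure hzS, hint⟩

section ConeAlgebra

variable (β : Fin N → (Fin k → ℝ)) (I : Set (Fin N))

theorem coneOf_zero : (0 : Fin k → ℝ) ∈ coneOf β I :=
  ⟨0, fun _ => le_refl 0, fun _ _ => rfl, by simp⟩

theorem coneOf_add {u v : Fin k → ℝ} (hu : u ∈ coneOf β I) (hv : v ∈ coneOf β I) :
    u + v ∈ coneOf β I := by
  obtain ⟨t, ht0, htI, rfl⟩ := hu
  obtain ⟨t', ht0', htI', rfl⟩ := hv
  refine ⟨t + t', fun i => add_nonneg (ht0 i) (ht0' i),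
    fun i hi => by simp [htI i hi, htI' i hi], ?_⟩
  rw [← Finset.sum_add_distrib]
  exact Finset.sum_congr rfl fun i _ => (add_smul _ _ _).symm

theorem coneOf_smul {r : ℝ} (hr : 0 ≤ r) {v : Fin k → ℝ} (hv : v ∈ coneOf β I) :
    r • v ∈ coneOf β I := by
  obtain ⟨t, ht0, htI, rfl⟩ := hv
  refine ⟨fun i => r * t i, fun i => mul_nonneg hr (ht0 i),
    fun i hi => by simp [htI i hi], ?_⟩
  rw [Finset.smul_sum]
  congr 1; ext i; rw [smul_smul]

theorem coneOf_gen {i : Fin N} (hi : i ∈ I) : β i ∈ coneOf β I := by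
  refine ⟨fun j => if j = i then 1 else 0, fun j => by positivity,
    fun j hj => if_neg (fun h : j = i => hj (h ▸ hi)), ?_⟩
  simp [ite_smul]

/-- The lineality part of the cone. -/
def linSet : Set (Fin k → ℝ) := {v | v ∈ coneOf β I ∧ -v ∈ coneOf β I}

theorem linSet_zero : (0 : Fin k → ℝ) ∈ linSet β I :=
  ⟨coneOf_zero β I, by rw [neg_zero]; exact coneOf_zero β I⟩

theorem linSet_add {u v : Fin k → ℝ} (hu : u ∈ linSet β I) (hv : v ∈ linSet β I) :
    u + v ∈ linSet β I :=
  ⟨coneOf_add β I hu.1 hv.1, by rw [neg_add]; exact coneOf_add β I hu.2 hv.2⟩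

theorem linSet_neg {v : Fin k → ℝ} (hv : v ∈ linSet β I) : -v ∈ linSet β I :=
  ⟨hv.2, by rw [neg_neg]; exact hv.1⟩

theorem linSet_smul (r : ℝ) {v : Fin k → ℝ} (hv : v ∈ linSet β I) : r • v ∈ linSet β I := by
  rcases le_or_gt 0 r with hr | hr
  · exact ⟨coneOf_smul β I hr hv.1, by rw [← smul_neg]; exact coneOf_smul β I hr hv.2⟩
  · have h1 : r • v = (-r) • (-v) := by simp
    have h2 : -(r • v) = (-r) • v := by simp
    exact ⟨h1 ▸ coneOf_smul β I (by linarith) hv.2, h2 ▸ coneOf_smul β I (by linarith) hv.1⟩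

theorem linSet_sum {ι : Type*} (s : Finset ι) (g : ι → (Fin k → ℝ))
    (h : ∀ i ∈ s, g i ∈ linSet β I) : ∑ i ∈ s, g i ∈ linSet β I := by
  induction s using Finset.cons_induction with
  | empty => simpa using linSet_zero β I
  | cons a s ha ih =>
      rw [Finset.sum_cons]
      exact linSet_add β I (h a (Finset.mem_cons_self a s))
        (ih fun i hi => h i (Finset.mem_cons_of_mem hi))

theorem key_B (u : Fin N → ℝ) (hu0 : ∀ i, 0 ≤ u i)
    (hsupp : ∀ i, u i ≠ 0 → i ∈ I ∧ β i ∉ linSet β I)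
    (hmem : ∑ i, u i • β i ∈ linSet β I) : ∀ i, u i = 0 := by
  intro i₀
  by_contra h0
  obtain ⟨hi₀I, hi₀B⟩ := hsupp i₀ h0
  have hpos : 0 < u i₀ := lt_of_le_of_ne (hu0 i₀) (Ne.symm h0)
  set q : Fin k → ℝ := ∑ j, (Function.update u i₀ 0) j • β j with hq
  have hqΓ : q ∈ coneOf β I := by
    refine ⟨Function.update u i₀ 0, fun j => ?_, fun j hj => ?_, rfl⟩
    · rcases eq_or_ne j i₀ with rfl | hne
      · simp
      · simpa [Function.update_of_ne hne] using hu0 j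
    · rcases eq_or_ne j i₀ with rfl | hne
      · simp
      · rw [Function.update_of_ne hne]
        by_contra hx
        exact hj (hsupp j hx).1
  have hsplit : ∑ j, u j • β j = u i₀ • β i₀ + q := by
    rw [hq]
    have : ∀ j, (Function.update u i₀ 0) j • β j
        = Function.update (fun j => u j • β j) i₀ 0 j := by
      intro j
      rcases eq_or_ne j i₀ with rfl | hne
      · simp
      · simp [Function.update_of_ne hne]
    rw [Finset.sum_congr rfl fun j _ => this j,
      Finset.sum_update_of_mem (Finset.mem_univ i₀), zero_add,
      ← Finset.add_sum_erase _ _ (Finset.mem_univ i₀), Finset.erase_eq]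
  have hneg : u i₀ • (-β i₀) ∈ coneOf β I := by
    have : u i₀ • (-β i₀) = -(∑ j, u j • β j) + q := by
      rw [hsplit, smul_neg]; abel
    rw [this]
    exact coneOf_add β I hmem.2 hqΓ
  have hβneg : -β i₀ ∈ coneOf β I := by
    have : -β i₀ = (u i₀)⁻¹ • (u i₀ • (-β i₀)) := by
      rw [smul_smul, inv_mul_cancel₀ (ne_of_gt hpos), one_smul]
    rw [this]
    exact coneOf_smul β I (by positivity) hneg
  exact hi₀B ⟨coneOf_gen β I hi₀I, hβneg⟩

theorem exists_theta : ∃ θ : Fin N → ℝ,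
    (∀ i, i ∈ I → β i ∈ linSet β I → 1 ≤ θ i) ∧
    (∀ i, ¬(i ∈ I ∧ β i ∈ linSet β I) → θ i = 0) ∧
    ∑ i, θ i • β i = 0 := by
  classical
  set χ : Fin N → ℝ := fun i => if i ∈ I ∧ β i ∈ linSet β I then 1 else 0 with hχ
  set l : Fin k → ℝ := ∑ i, χ i • β i with hl
  have hlL : l ∈ linSet β I := by
    apply linSet_sum
    intro i _
    by_cases h : i ∈ I ∧ β i ∈ linSet β I
    · simpa [hχ, h] using linSet_smul β I 1 h.2
    · simp [hχ, h, linSet_zero β I]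
  obtain ⟨t, ht0, htI, htsum⟩ := hlL.2
  have htB : ∀ i, i ∈ I → β i ∉ linSet β I → t i = 0 := by
    intro i hiI hiB
    set u : Fin N → ℝ := fun j => if j ∈ I ∧ β j ∉ linSet β I then t j else 0 with hu
    set uA : Fin N → ℝ := fun j => if β j ∈ linSet β I then t j else 0 with huA
    have hpt : ∀ j, t j • β j = u j • β j + uA j • β j := by
      intro j
      by_cases h1 : β j ∈ linSet β I
      · have : u j = 0 := by simp [hu, h1]
        simp [this, huA, h1]
      · by_cases h2 : j ∈ I
        · have : u j = t j := by simp [hu, h1, h2]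
          simp [this, huA, h1]
        · simp [hu, huA, h1, h2, htI j h2]
    have hmem : ∑ j, u j • β j ∈ linSet β I := by
      have hsum : ∑ j, u j • β j = -l + -(∑ j, uA j • β j) := by
        have h1 : ∑ j, t j • β j = ∑ j, u j • β j + ∑ j, uA j • β j := by
          rw [← Finset.sum_add_distrib]
          exact Finset.sum_congr rfl fun j _ => hpt j
        rw [← htsum] at h1
        rw [h1]; abel
      rw [hsum]
      refine linSet_add β I (linSet_neg β I hlL) (linSet_neg β I ?_)
      apply linSet_sum
      intro j _
      by_cases h1 : β j ∈ linSet β I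
      · simpa [huA, h1] using linSet_smul β I (t j) h1
      · simp [huA, h1, linSet_zero β I]
    have := key_B β I u
      (fun j => by by_cases h : j ∈ I ∧ β j ∉ linSet β I <;> simp [hu, h, ht0 j])
      (fun j hj => by
        by_contra h
        exact hj (by simp [hu, h]))
      hmem i
    simpa [hu, hiI, hiB] using this
  refine ⟨χ + t, fun i hiI hiL => ?_, fun i hi => ?_, ?_⟩
  · have : χ i = 1 := by simp [hχ, hiI, hiL]
    have h2 := ht0 i
    simp only [Pi.add_apply, this]
    linarith
  · have h1 : χ i = 0 := by simp only [hχ]; rw [if_neg hi]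
    have h2 : t i = 0 := by
      by_cases hiI : i ∈ I
      · exact htB i hiI fun hL => hi ⟨hiI, hL⟩
      · exact htI i hiI
    simp [h1, h2]
  · have : ∑ i, (χ + t) i • β i = ∑ i, χ i • β i + ∑ i, t i • β i := by
      rw [← Finset.sum_add_distrib]
      exact Finset.sum_congr rfl fun j _ => by simp [add_smul]
    rw [this, ← hl, ← htsum]
    abel

end ConeAlgebra

/-- The pairing functional `v ↦ ∑ j, η j * v j` as a linear map. -/
def pLin (η : Fin k → ℝ) : (Fin k → ℝ) →ₗ[ℝ] ℝ :=
  ∑ j, η j • LinearMap.proj j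

theorem pLin_apply (η v : Fin k → ℝ) : pLin η v = ∑ j, η j * v j := by
  simp [pLin, LinearMap.sum_apply]

theorem exists_eta (β : Fin N → (Fin k → ℝ)) (hβ0 : ∀ i, β i ≠ 0) :
    ∃ η : Fin k → ℝ, ∀ i, pLin η (β i) ≠ 0 := by
  classical
  set p : Fin N → Polynomial ℝ := fun i => ∑ j : Fin k, Polynomial.monomial (j : ℕ) (β i j) with hp
  have hpne : ∀ i, p i ≠ 0 := by
    intro i hzero
    obtain ⟨j₀, hj₀⟩ : ∃ j₀, β i j₀ ≠ 0 := by
      by_contra h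
      push_neg at h
      exact hβ0 i (funext h)
    have : (p i).coeff (j₀ : ℕ) = β i j₀ := by
      rw [hp]
      rw [Polynomial.finset_sum_coeff]
      rw [Finset.sum_eq_single j₀]
      · simp
      · intro j _ hne
        rw [Polynomial.coeff_monomial, if_neg (fun h => hne (Fin.val_injective h))]
      · simp
    rw [hzero] at this
    simp at this
    exact hj₀ this.symm
  have hfin : (⋃ i, {x : ℝ | (p i).IsRoot x}).Finite :=
    Set.finite_iUnion fun i => Polynomial.finite_setOf_isRoot (hpne i)
  obtain ⟨τ, hτ⟩ := Set.Finite.exists_notMem hfin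
  refine ⟨fun j => τ ^ (j : ℕ), fun i => ?_⟩
  have heval : pLin (fun j => τ ^ (j : ℕ)) (β i) = (p i).eval τ := by
    rw [pLin_apply, hp]
    rw [Polynomial.eval_finset_sum]
    exact Finset.sum_congr rfl fun j _ => by rw [Polynomial.eval_monomial]; ring
  rw [heval]
  intro h
  exact hτ (Set.mem_iUnion.2 ⟨i, h⟩)

theorem zero_not_mem_convexHull_indep {s : Set (Fin k → ℝ)} (hfin : s.Finite)
    (hind : LinearIndependent ℝ ((↑) : s → (Fin k → ℝ))) :
    (0 : Fin k → ℝ) ∉ convexHull ℝ s := by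
  classical
  intro h0
  rw [← hfin.coe_toFinset, Finset.convexHull_eq] at h0
  obtain ⟨w, hw0, hw1, hwc⟩ := h0
  rw [Finset.centerMass_eq_of_sum_1 _ _ hw1] at hwc
  simp only [id] at hwc
  -- transfer independence to the finset
  have hinj : Function.Injective
      (fun i : ↥hfin.toFinset => (⟨(i : Fin k → ℝ), (hfin.mem_toFinset).1 i.2⟩ : s)) := by
    intro a b hab
    have h2 : ((⟨(a : Fin k → ℝ), (hfin.mem_toFinset).1 a.2⟩ : s) : Fin k → ℝ)
        = ((⟨(b : Fin k → ℝ), (hfin.mem_toFinset).1 b.2⟩ : s) : Fin k → ℝ) :=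
      congrArg Subtype.val hab
    exact Subtype.ext h2
  have hind' : LinearIndependent ℝ (fun i : ↥hfin.toFinset => (i : Fin k → ℝ)) :=
    hind.comp _ hinj
  have := linearIndependent_iff'.1 hind' Finset.univ (fun i => w i)
  have hzero : ∑ i : ↥hfin.toFinset, w i • (i : Fin k → ℝ) = 0 := by
    rw [← hwc, ← Finset.sum_attach hfin.toFinset (fun y => w y • y)]
    rfl
  have hall : ∀ i : ↥hfin.toFinset, w i = 0 := fun i =>
    this hzero i (Finset.mem_univ i)
  have : ∑ y ∈ hfin.toFinset, w y = 0 := by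
    rw [← Finset.sum_attach hfin.toFinset (fun y => w y)]
    exact Finset.sum_eq_zero fun i _ => hall i
  rw [hw1] at this
  exact one_ne_zero this

section Separation

variable (β : Fin N → (Fin k → ℝ)) (I : Set (Fin N))

/-- The coefficient-sum linear map `w ↦ ∑ i, w i • β i`. -/
def TL (β : Fin N → (Fin k → ℝ)) : (Fin N → ℝ) →ₗ[ℝ] (Fin k → ℝ) :=
  ∑ i, (LinearMap.proj i : (Fin N → ℝ) →ₗ[ℝ] ℝ).smulRight (β i)

theorem TL_apply (w : Fin N → ℝ) : TL β w = ∑ i, w i • β i := by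
  simp [TL, LinearMap.sum_apply]

theorem exists_f0 : ∃ f₀ : (Fin k → ℝ) →L[ℝ] ℝ,
    (∀ i, i ∈ I → β i ∉ linSet β I → f₀ (β i) < 0) ∧
    (∀ v ∈ Submodule.span ℝ (β '' {i | i ∈ I ∧ β i ∈ linSet β I}), f₀ v = 0) := by
  classical
  set A : Set (Fin N) := {i | i ∈ I ∧ β i ∈ linSet β I} with hA
  set B : Set (Fin N) := {i | i ∈ I ∧ β i ∉ linSet β I} with hB
  set LS : Submodule ℝ (Fin k → ℝ) := Submodule.span ℝ (β '' A) with hLS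
  have hLSsub : (LS : Set (Fin k → ℝ)) ⊆ linSet β I := by
    intro v hv
    induction hv using Submodule.span_induction with
    | mem x hx =>
        obtain ⟨i, hi, rfl⟩ := hx
        exact hi.2
    | zero => exact linSet_zero β I
    | add x y _ _ hx hy => exact linSet_add β I hx hy
    | smul r x _ hx => exact linSet_smul β I r hx
  set SB : Set (Fin N → ℝ) := stdSimplex ℝ (Fin N) ∩ {w | ∀ i, i ∉ B → w i = 0} with hSB
  have hSBclosed : IsClosed {w : Fin N → ℝ | ∀ i, i ∉ B → w i = 0} := by
    have : {w : Fin N → ℝ | ∀ i, i ∉ B → w i = 0}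
        = ⋂ i, ⋂ (_ : i ∉ B), {w | w i = 0} := by
      ext w; simp
    rw [this]
    exact isClosed_iInter fun i => isClosed_iInter fun _ =>
      isClosed_eq (continuous_apply i) continuous_const
  have hSBconv : Convex ℝ SB := by
    refine (convex_stdSimplex ℝ (Fin N)).inter ?_
    intro x hx y hy a b _ _ _
    intro i hi
    simp [hx i hi, hy i hi]
  set K : Set (Fin k → ℝ) := TL β '' SB with hK
  have hKcomp : IsCompact K :=
    (((isCompact_stdSimplex ℝ (Fin N)).inter_right hSBclosed).image
      (TL β).continuous_of_finiteDimensional)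
  have hKconv : Convex ℝ K := hSBconv.linear_image (TL β)
  have hdisj : Disjoint K (LS : Set (Fin k → ℝ)) := by
    rw [Set.disjoint_left]
    rintro q ⟨w, ⟨hwstd, hwB⟩, rfl⟩ hqLS
    have hmem : ∑ i, w i • β i ∈ linSet β I := by
      rw [← TL_apply]
      exact hLSsub hqLS
    have hzero := key_B β I w hwstd.1
      (fun i hi => by
        by_contra h
        exact hi (hwB i (fun hiB => h ⟨hiB.1, hiB.2⟩)))
      hmem
    have : ∑ i, w i = 1 := hwstd.2
    rw [Finset.sum_eq_zero (fun i _ => hzero i)] at this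
    exact one_ne_zero this.symm
  obtain ⟨f, u, v, hfK, huv, hfLS⟩ := geometric_hahn_banach_compact_closed hKconv hKcomp
    LS.convex (Submodule.closed_of_finiteDimensional LS) hdisj
  have hf0 : ∀ x ∈ LS, f x = 0 := by
    intro x hx
    by_contra hne
    have h1 := hfLS (((v - 1) / f x) • x) (LS.smul_mem _ hx)
    rw [map_smul, smul_eq_mul, div_mul_cancel₀ _ hne] at h1
    linarith
  have hv0 : v < 0 := by
    have := hfLS 0 LS.zero_mem
    rw [map_zero] at this
    linarith
  refine ⟨f, fun i hiI hiB => ?_, hf0⟩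
  have hβK : β i ∈ K := by
    refine ⟨fun j => if j = i then 1 else 0, ⟨⟨fun j => by positivity, by simp⟩, ?_⟩, ?_⟩
    · intro j hj
      refine if_neg (fun h : j = i => hj ?_)
      rw [h]; exact ⟨hiI, hiB⟩
    · rw [TL_apply]
      simp [ite_smul]
  have := hfK _ hβK
  linarith

theorem exists_g {s : Set (Fin k → ℝ)} (hfin : s.Finite)
    (hind : LinearIndependent ℝ ((↑) : s → (Fin k → ℝ))) :
    ∃ g : (Fin k → ℝ) →L[ℝ] ℝ, ∀ v ∈ s, g v < 0 := by
  obtain ⟨f, u, v, hfK, huv, hf0⟩ := geometric_hahn_banach_compact_closed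
    (convex_convexHull ℝ s) (hfin.isCompact_convexHull ℝ) (convex_singleton 0)
    isClosed_singleton
    (Set.disjoint_left.2 fun q hq hq0 => by
      rw [Set.mem_singleton_iff] at hq0
      exact zero_not_mem_convexHull_indep hfin hind (hq0 ▸ hq))
  have h0 : v < 0 := by
    have := hf0 0 rfl
    rw [map_zero] at this
    linarith
  exact ⟨f, fun x hx => by have := hfK x (subset_convexHull ℝ s hx); linarith⟩

theorem exists_small {α : Type*} (S : Finset α) (a b : α → ℝ) (ha : ∀ i ∈ S, a i < 0) :
    ∃ ε : ℝ, 0 < ε ∧ ∀ δ : ℝ, 0 < δ → δ ≤ ε → ∀ i ∈ S, a i + δ * b i < 0 := by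
  classical
  set T : Finset ℝ := insert 1 (S.image fun i => (-(a i)) / (|b i| + 1)) with hT
  have hTne : T.Nonempty := ⟨1, Finset.mem_insert_self _ _⟩
  have hpos : ∀ x ∈ T, 0 < x := by
    intro x hx
    rcases Finset.mem_insert.1 hx with rfl | hx
    · norm_num
    · obtain ⟨i, hi, rfl⟩ := Finset.mem_image.1 hx
      have := ha i hi
      exact div_pos (by linarith) (by positivity)
  refine ⟨T.min' hTne, hpos _ (T.min'_mem hTne), ?_⟩
  intro δ hδ0 hδle i hi
  have hle : T.min' hTne ≤ (-(a i)) / (|b i| + 1) :=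
    Finset.min'_le _ _ (Finset.mem_insert_of_mem (Finset.mem_image_of_mem _ hi))
  have h1 : δ ≤ (-(a i)) / (|b i| + 1) := le_trans hδle hle
  have h2 : δ * |b i| ≤ ((-(a i)) / (|b i| + 1)) * |b i| :=
    mul_le_mul_of_nonneg_right h1 (abs_nonneg _)
  have h3 : ((-(a i)) / (|b i| + 1)) * |b i| < -(a i) := by
    rw [div_mul_eq_mul_div, div_lt_iff₀ (by positivity)]
    nlinarith [abs_nonneg (b i), ha i hi]
  have h4 : δ * b i ≤ δ * |b i| := mul_le_mul_of_nonneg_left (le_abs_self _) hδ0.le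
  linarith

end Separation

theorem exists_good_functional (β : Fin N → (Fin k → ℝ)) (hβ0 : ∀ i, β i ≠ 0)
    (I : Set (Fin N)) :
    ∃ (F : (Fin k → ℝ) →ₗ[ℝ] ℝ) (sset : Set (Fin k → ℝ)),
      sset ⊆ β '' {i | i ∈ I ∧ β i ∈ linSet β I} ∧
      Submodule.span ℝ sset = Submodule.span ℝ (β '' {i | i ∈ I ∧ β i ∈ linSet β I}) ∧
      (∀ i, i ∈ I → β i ∉ linSet β I → F (β i) < 0) ∧
      (∀ v ∈ sset, F v < 0) ∧
      (∀ i, F (β i) ≠ 0) := by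
  classical
  set A : Set (Fin N) := {i | i ∈ I ∧ β i ∈ linSet β I} with hA
  obtain ⟨sset, hsub, hspan, hind⟩ := exists_linearIndependent ℝ (β '' A)
  have hsfin : sset.Finite := (Set.toFinite (β '' A)).subset hsub
  obtain ⟨f₀, hf₀B, hf₀L⟩ := exists_f0 β I
  obtain ⟨g, hg⟩ := exists_g hsfin hind
  -- first perturbation: f₁ = f₀ + ε g
  set Bv : Finset (Fin k → ℝ) :=
    (Finset.univ.filter (fun i => i ∈ I ∧ β i ∉ linSet β I)).image β with hBv
  obtain ⟨ε, hε0, hε⟩ := exists_small Bv (fun v => f₀ v) (fun v => g v)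
    (by
      intro v hv
      obtain ⟨i, hi, rfl⟩ := Finset.mem_image.1 hv
      obtain ⟨hiI, hiB⟩ := Finset.mem_filter.1 hi |>.2
      exact hf₀B i hiI hiB)
  set f₁ : (Fin k → ℝ) → ℝ := fun v => f₀ v + ε * g v with hf₁
  have hf₁B : ∀ i, i ∈ I → β i ∉ linSet β I → f₁ (β i) < 0 := by
    intro i hiI hiB
    exact hε ε hε0 le_rfl (β i)
      (Finset.mem_image_of_mem β (Finset.mem_filter.2 ⟨Finset.mem_univ i, hiI, hiB⟩))
  have hf₁s : ∀ v ∈ sset, f₁ v < 0 := by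
    intro v hv
    have h0 : f₀ v = 0 := hf₀L v (Submodule.subset_span (hsub hv))
    have := hg v hv
    rw [hf₁]
    simp only
    rw [h0]
    nlinarith
  -- second perturbation: F = f₁ + σ ⟨η, ·⟩
  obtain ⟨η, hη⟩ := exists_eta β hβ0
  set Sv : Finset (Fin k → ℝ) := Bv ∪ hsfin.toFinset with hSv
  obtain ⟨ε₂, hε₂0, hε₂⟩ := exists_small Sv f₁ (fun v => pLin η v)
    (by
      intro v hv
      rcases Finset.mem_union.1 hv with hv | hv
      · obtain ⟨i, hi, rfl⟩ := Finset.mem_image.1 hv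
        obtain ⟨hiI, hiB⟩ := Finset.mem_filter.1 hi |>.2
        exact hf₁B i hiI hiB
      · exact hf₁s v (hsfin.mem_toFinset.1 hv))
  set Sbad : Set ℝ := ⋃ i, {x : ℝ | f₁ (β i) + x * pLin η (β i) = 0} with hSbad
  have hSbadfin : Sbad.Finite := by
    apply Set.finite_iUnion
    intro i
    have : {x : ℝ | f₁ (β i) + x * pLin η (β i) = 0} ⊆ {-(f₁ (β i)) / pLin η (β i)} := by
      intro x hx
      rw [Set.mem_setOf_eq] at hx
      rw [Set.mem_singleton_iff, eq_div_iff (hη i)]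
      linarith
    exact (Set.finite_singleton _).subset this
  obtain ⟨σ, hσ⟩ := ((Set.Ioo_infinite hε₂0).diff hSbadfin).nonempty
  obtain ⟨⟨hσ0, hσε⟩, hσbad⟩ := hσ
  refine ⟨f₀.toLinearMap + ε • g.toLinearMap + σ • pLin η, sset, hsub, hspan, ?_, ?_, ?_⟩
  · intro i hiI hiB
    have := hε₂ σ hσ0 hσε.le (β i)
      (Finset.mem_union_left _
        (Finset.mem_image_of_mem β (Finset.mem_filter.2 ⟨Finset.mem_univ i, hiI, hiB⟩)))
    simpa [hf₁, add_assoc] using this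
  · intro v hv
    have := hε₂ σ hσ0 hσε.le v (Finset.mem_union_right _ (hsfin.mem_toFinset.2 hv))
    simpa [hf₁, add_assoc] using this
  · intro i h0
    apply hσbad
    rw [hSbad, Set.mem_iUnion]
    refine ⟨i, ?_⟩
    simpa [hf₁, add_assoc] using h0

section HardStep

theorem hard_step (hN : 0 < N) (μ : (Fin N → ℝ) →ₗ[ℝ] (Fin k → ℝ))
    (β : Fin N → (Fin k → ℝ)) (hβ : ∀ i, β i = μ (Pi.single i 1)) (hβ0 : ∀ i, β i ≠ 0)
    (P : Set (Fin k → ℝ))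
    (hlarge : ∀ f : (Fin k → ℝ) →ₗ[ℝ] ℝ, f ≠ 0 → (∀ i, f (β i) ≠ 0) →
      ∃ s : Fin k → ℝ,
        {s} + ∑ i ∈ Finset.univ.filter (fun i => f (β i) ≤ 0), segment ℝ 0 (β i) ⊆ P)
    (C : Set (Fin k → ℝ)) (hC : ∃ x₀ ∈ gkzGood μ, C = connectedComponentIn (gkzGood μ) x₀)
    (I : Set (Fin N)) (hI : ((μ ⁻¹' C) ∩ tauRelInt I).Nonempty)
    (y : Fin k → ℝ) (hy : ∀ p ∈ P, y - p ∈ C)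
    (c : Fin N → ℝ) (hc0 : ∀ i, 0 ≤ c i) (hc1 : ∀ i, c i < 1)
    (hcI : ∀ i, i ∉ I → c i = 0) :
    ∃ (n : Fin N → ℕ) (p : Fin k → ℝ), p ∈ P ∧ (∀ i, i ∉ I → n i = 0) ∧
      y = p + ∑ i, (c i + n i) • β i := by
  classical
  obtain ⟨F, sset, hsub, hspan, hFB, hFs, hFne⟩ := exists_good_functional β hβ0 I
  have hF0 : F ≠ 0 := by
    intro h
    exact hFne ⟨0, hN⟩ (by rw [h]; rfl)
  obtain ⟨s, hsP⟩ := hlarge F hF0 hFne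
  have hPosA : ∀ i, i ∈ I → 0 < F (β i) → β i ∈ linSet β I := by
    intro i hiI hpos
    by_contra hlin
    exact absurd (hFB i hiI hlin) (by linarith)
  -- membership helper
  have hzP : ∀ z : Fin N → ℝ, (∀ i, 0 ≤ z i) → (∀ i, z i ≤ 1) →
      (∀ i, z i ≠ 0 → F (β i) < 0) → s + ∑ i, z i • β i ∈ P := by
    intro z h0 h1 hsupp
    apply hsP
    have hmem : ∑ i, z i • β i
        ∈ ∑ i ∈ Finset.univ.filter (fun i => F (β i) ≤ 0), segment ℝ 0 (β i) := by
      have hsum : ∑ i ∈ Finset.univ.filter (fun i => F (β i) ≤ 0), z i • β i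
          = ∑ i, z i • β i := by
        apply Finset.sum_subset (Finset.filter_subset _ _)
        intro i _ hi
        have : ¬ F (β i) ≤ 0 := by
          intro h
          exact hi (Finset.mem_filter.2 ⟨Finset.mem_univ i, h⟩)
        have hz : z i = 0 := by
          by_contra hz
          exact this (le_of_lt (hsupp i hz))
        rw [hz, zero_smul]
      rw [← hsum]
      apply sum_set_mem
      intro i _
      rw [segment_eq_image]
      exact ⟨z i, ⟨h0 i, h1 i⟩, by simp⟩
    exact Set.add_mem_add rfl hmem
  have hCsub : C ⊆ interior (μ '' tauCone I) := chamber_subset_interior μ C hC hI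
  have hCcone : C ⊆ coneOf β I := by
    intro x hx
    rw [← image_tauCone μ β hβ I]
    exact interior_subset (hCsub hx)
  -- base representation
  set z₀ : Fin N → ℝ := fun i => if i ∈ I ∧ F (β i) < 0 then c i else 0 with hz₀
  have hz₀P : s + ∑ i, z₀ i • β i ∈ P := by
    apply hzP
    · intro i
      by_cases h : i ∈ I ∧ F (β i) < 0 <;> simp [hz₀, h, hc0 i]
    · intro i
      by_cases h : i ∈ I ∧ F (β i) < 0
      · simpa [hz₀, h] using (hc1 i).le
      · simp [hz₀, h]
    · intro i hi
      by_cases h : i ∈ I ∧ F (β i) < 0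
      · exact h.2
      · exact absurd (by simp [hz₀, h]) hi
  obtain ⟨t, ht0, htI, htsum⟩ := hCcone (hy _ hz₀P)
  obtain ⟨θ, hθ1, hθ0, hθsum⟩ := exists_theta β I
  -- representations of -β i over negative lineality generators, for i positive
  have hrep : ∀ i : Fin N, ∃ Ei : Fin N → ℝ,
      (∀ j, Ei j ≠ 0 → j ∈ I ∧ β j ∈ linSet β I ∧ F (β j) < 0) ∧
      ((i ∈ I ∧ 0 < F (β i)) → ∑ j, Ei j • β j = -β i) := by
    intro i
    by_cases hi : i ∈ I ∧ 0 < F (β i)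
    · have hβlin : β i ∈ linSet β I := hPosA i hi.1 hi.2
      have hmem : -β i ∈ Submodule.span ℝ sset := by
        rw [hspan]
        exact Submodule.neg_mem _ (Submodule.subset_span ⟨i, ⟨hi.1, hβlin⟩, rfl⟩)
      obtain ⟨n, fco, gv, hsum⟩ := Submodule.mem_span_set'.1 hmem
      have hchoice : ∀ v : sset, ∃ j, j ∈ I ∧ β j ∈ linSet β I ∧ β j = (v : Fin k → ℝ) := by
        intro v
        obtain ⟨j, hjA, hβj⟩ := hsub v.2
        exact ⟨j, hjA.1, hjA.2, hβj⟩
      choose cidx hcidx1 hcidx2 hcidx3 using hchoice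
      refine ⟨fun j => ∑ m, if cidx (gv m) = j then fco m else 0, ?_, fun _ => ?_⟩
      · intro j hj
        have : ∃ m, (if cidx (gv m) = j then fco m else 0) ≠ 0 := by
          by_contra h
          push_neg at h
          exact hj (Finset.sum_eq_zero fun m _ => h m)
        obtain ⟨m, hm⟩ := this
        have heq : cidx (gv m) = j := by
          by_contra h
          rw [if_neg h] at hm
          exact hm rfl
        have hFneg : F (β j) < 0 := by
          rw [← heq, hcidx3 (gv m)]
          exact hFs _ (gv m).2
        exact ⟨heq ▸ hcidx1 (gv m), heq ▸ hcidx2 (gv m), hFneg⟩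
      · rw [← hsum]
        have step1 : ∀ j, (∑ m, if cidx (gv m) = j then fco m else 0) • β j
            = ∑ m, (if cidx (gv m) = j then fco m • β j else 0) := by
          intro j
          rw [Finset.sum_smul]
          exact Finset.sum_congr rfl fun m _ => by
            by_cases h : cidx (gv m) = j <;> simp [h]
        rw [Finset.sum_congr rfl fun j _ => step1 j, Finset.sum_comm]
        apply Finset.sum_congr rfl
        intro m _
        rw [Finset.sum_ite_eq, if_pos (Finset.mem_univ _), hcidx3 (gv m)]
    · exact ⟨0, fun j hj => absurd rfl hj, fun h => absurd h hi⟩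
  choose E hE1 hE2 using hrep
  set PosF : Finset (Fin N) := Finset.univ.filter (fun i => i ∈ I ∧ 0 < F (β i)) with hPosF
  set M : ℝ := 1 + ∑ j, ∑ i ∈ PosF, |E i j| with hM
  have hM1 : 1 ≤ M := by
    have hnn : (0:ℝ) ≤ ∑ j, ∑ i ∈ PosF, |E i j| := by positivity
    linarith
  set d : Fin N → ℝ := fun i =>
    if i ∈ I ∧ 0 < F (β i) then Int.fract (c i - t i - M * θ i) else 0 with hd
  have hd0 : ∀ i, 0 ≤ d i := by
    intro i
    by_cases h : i ∈ I ∧ 0 < F (β i)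
    · simp only [hd, if_pos h]
      exact Int.fract_nonneg _
    · simp [hd, h]
  have hd1 : ∀ i, d i ≤ 1 := by
    intro i
    by_cases h : i ∈ I ∧ 0 < F (β i)
    · simp only [hd, if_pos h]
      exact (Int.fract_lt_one _).le
    · simp [hd, h]
  set e : Fin N → ℝ := fun j => ∑ i ∈ PosF, d i * E i j with he
  have hebound : ∀ j, |e j| ≤ M - 1 := by
    intro j
    have h1 : |e j| ≤ ∑ i ∈ PosF, |d i * E i j| := Finset.abs_sum_le_sum_abs _ _
    have h2 : ∑ i ∈ PosF, |d i * E i j| ≤ ∑ i ∈ PosF, |E i j| := by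
      apply Finset.sum_le_sum
      intro i _
      rw [abs_mul]
      exact mul_le_of_le_one_left (abs_nonneg _) (abs_le.2 ⟨by linarith [hd0 i], hd1 i⟩)
    have h3 : ∑ i ∈ PosF, |E i j| ≤ ∑ j', ∑ i ∈ PosF, |E i j'| :=
      Finset.single_le_sum (f := fun j' => ∑ i ∈ PosF, |E i j'|)
        (fun _ _ => by positivity) (Finset.mem_univ j)
    have h4 : ∑ j', ∑ i ∈ PosF, |E i j'| = M - 1 := by rw [hM]; ring
    linarith
  have heSupp : ∀ j, e j ≠ 0 → j ∈ I ∧ β j ∈ linSet β I ∧ F (β j) < 0 := by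
    intro j hj
    by_contra h
    apply hj
    rw [he]
    apply Finset.sum_eq_zero
    intro i _
    by_cases hE : E i j = 0
    · simp [hE]
    · exact absurd (hE1 i j hE) h
  set a : Fin N → ℝ := fun j => t j + z₀ j + M * θ j + d j + e j with ha
  have hsuma : ∑ j, a j • β j = y - s := by
    have h1 : ∑ j, a j • β j = (∑ j, t j • β j) + (∑ j, z₀ j • β j)
        + (∑ j, (M * θ j) • β j) + (∑ j, d j • β j) + (∑ j, e j • β j) := by
      rw [← Finset.sum_add_distrib, ← Finset.sum_add_distrib, ← Finset.sum_add_distrib,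
        ← Finset.sum_add_distrib]
      exact Finset.sum_congr rfl fun j _ => by simp [ha, add_smul]
    have h2 : ∑ j, (M * θ j) • β j = 0 := by
      have hstep : ∀ j, (M * θ j) • β j = M • (θ j • β j) := fun j => by rw [smul_smul]
      rw [Finset.sum_congr rfl fun j _ => hstep j, ← Finset.smul_sum, hθsum, smul_zero]
    have hdsupp : ∑ j, d j • β j = ∑ j ∈ PosF, d j • β j := by
      symm
      apply Finset.sum_subset (Finset.subset_univ _)
      intro j _ hj
      have hcond : ¬(j ∈ I ∧ 0 < F (β j)) := fun h =>
        hj (Finset.mem_filter.2 ⟨Finset.mem_univ j, h⟩)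
      simp [hd, hcond]
    have h3 : ∑ j, e j • β j = - ∑ j, d j • β j := by
      have hc1' : ∑ j, e j • β j = ∑ i ∈ PosF, d i • ∑ j, E i j • β j := by
        calc ∑ j, e j • β j = ∑ j, ∑ i ∈ PosF, (d i * E i j) • β j :=
              Finset.sum_congr rfl fun j _ => by rw [he]; exact Finset.sum_smul
          _ = ∑ i ∈ PosF, ∑ j, (d i * E i j) • β j := Finset.sum_comm
          _ = ∑ i ∈ PosF, d i • ∑ j, E i j • β j := by
              refine Finset.sum_congr rfl fun i _ => ?_
              rw [Finset.smul_sum]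
              exact Finset.sum_congr rfl fun j _ => (smul_smul _ _ _).symm
      rw [hc1', hdsupp]
      rw [Finset.sum_congr rfl fun i hi => by
        rw [hE2 i (Finset.mem_filter.1 hi).2, smul_neg]]
      exact Finset.sum_neg_distrib _
    rw [h1, h2, h3, ← htsum]
    abel
  have haI : ∀ j, j ∉ I → a j = 0 := by
    intro j hj
    have h1 : t j = 0 := htI j hj
    have h2 : z₀ j = 0 := by
      simp only [hz₀]
      exact if_neg (fun h => hj h.1)
    have h3 : θ j = 0 := hθ0 j (fun h => hj h.1)
    have h4 : d j = 0 := by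
      simp only [hd]
      exact if_neg (fun h => hj h.1)
    have h5 : e j = 0 := by
      by_contra h
      exact hj (heSupp j h).1
    simp [ha, h1, h2, h3, h4, h5]
  have hcle : ∀ j, j ∈ I → c j ≤ a j := by
    intro j hjI
    rcases lt_trichotomy (F (β j)) 0 with hneg | h0 | hpos
    · have hz₀j : z₀ j = c j := if_pos ⟨hjI, hneg⟩
      have hdj : d j = 0 := by
        have : ¬(j ∈ I ∧ 0 < F (β j)) := fun h => lt_asymm hneg h.2
        simp [hd, this]
      by_cases hlin : β j ∈ linSet β I
      · have hθj : 1 ≤ θ j := hθ1 j hjI hlin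
        have heb := abs_le.1 (hebound j)
        have hMθ : M ≤ M * θ j := le_mul_of_one_le_right (by linarith) hθj
        simp only [ha, hz₀j, hdj]
        nlinarith [ht0 j, heb.1]
      · have hθj : θ j = 0 := hθ0 j (fun h => hlin h.2)
        have hej : e j = 0 := by
          by_contra h
          exact hlin (heSupp j h).2.1
        simp only [ha, hz₀j, hdj, hθj, hej]
        nlinarith [ht0 j]
    · exact absurd h0 (hFne j)
    · have hz₀j : z₀ j = 0 := by
        have : ¬(j ∈ I ∧ F (β j) < 0) := fun h => lt_asymm hpos h.2
        simp [hz₀, this]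
      have hej : e j = 0 := by
        by_contra h
        exact absurd (heSupp j h).2.2 (by linarith)
      have hθj : 1 ≤ θ j := hθ1 j hjI (hPosA j hjI hpos)
      have hdj : 0 ≤ d j := hd0 j
      have hMθ : M ≤ M * θ j := le_mul_of_one_le_right (by linarith) hθj
      simp only [ha, hz₀j, hej]
      nlinarith [ht0 j, hc1 j]
  have haPos : ∀ j, j ∈ I → 0 < F (β j) → ∃ m : ℤ, a j - c j = (m : ℝ) := by
    intro j hjI hpos
    have hz₀j : z₀ j = 0 := by
      have : ¬(j ∈ I ∧ F (β j) < 0) := fun h => lt_asymm hpos h.2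
      simp [hz₀, this]
    have hej : e j = 0 := by
      by_contra h
      exact absurd (heSupp j h).2.2 (by linarith)
    have hdj : d j = Int.fract (c j - t j - M * θ j) := by simp [hd, hjI, hpos]
    refine ⟨-⌊c j - t j - M * θ j⌋, ?_⟩
    have hself := Int.self_sub_fract (c j - t j - M * θ j)
    simp only [ha, hz₀j, hej, hdj]
    push_cast
    linarith
  set n : Fin N → ℕ := fun j => (⌊a j - c j⌋).toNat with hn
  set zf : Fin N → ℝ := fun j => Int.fract (a j - c j) with hzf
  have hnth : ∀ j, c j + (n j : ℝ) + zf j = a j := by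
    intro j
    by_cases hjI : j ∈ I
    · have hge : (0:ℤ) ≤ ⌊a j - c j⌋ := Int.floor_nonneg.2 (by linarith [hcle j hjI])
      have hcast : ((n j : ℤ) : ℝ) = ((⌊a j - c j⌋ : ℤ) : ℝ) := by
        rw [hn]; norm_cast; exact Int.toNat_of_nonneg hge
      have hfl := Int.floor_add_fract (a j - c j)
      push_cast at hcast
      rw [hzf]
      simp only
      linarith
    · have ha0 : a j = 0 := haI j hjI
      have hc0' : c j = 0 := hcI j hjI
      simp [hn, hzf, ha0, hc0']
  have hzf0 : ∀ j, 0 ≤ zf j := fun j => Int.fract_nonneg _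
  have hzf1 : ∀ j, zf j ≤ 1 := fun j => (Int.fract_lt_one _).le
  have hzfsupp : ∀ j, zf j ≠ 0 → F (β j) < 0 := by
    intro j hj
    by_cases hjI : j ∈ I
    · rcases lt_trichotomy (F (β j)) 0 with hneg | h0 | hpos
      · exact hneg
      · exact absurd h0 (hFne j)
      · obtain ⟨m, hm⟩ := haPos j hjI hpos
        rw [hzf] at hj
        simp only at hj
        rw [hm, Int.fract_intCast] at hj
        exact absurd rfl hj
    · have : a j - c j = 0 := by rw [haI j hjI, hcI j hjI]; ring
      rw [hzf] at hj
      simp only at hj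
      rw [this, Int.fract_zero] at hj
      exact absurd rfl hj
  have hpP : s + ∑ j, zf j • β j ∈ P := hzP zf hzf0 hzf1 hzfsupp
  refine ⟨n, s + ∑ j, zf j • β j, hpP, ?_, ?_⟩
  · intro i hi
    simp [hn, haI i hi, hcI i hi]
  · have hcomb : (s + ∑ j, zf j • β j) + ∑ j, ((c j + (n j : ℝ))) • β j
        = s + ∑ j, a j • β j := by
      rw [add_assoc, ← Finset.sum_add_distrib]
      congr 1
      refine Finset.sum_congr rfl fun j _ => ?_
      rw [← add_smul]
      congr 1
      linarith [hnth j]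
    rw [hcomb, hsuma]
    abel

end HardStep


end Aux

/-- **Theorem (window skeleton agrees with GIT skeleton on the stable region).**
Let `P ⊆ ℝ^k` be a large-enough bounded convex polytope, `W = P ∩ ℤ^k`, `C` a GKZ
chamber and `C_P = ⋂_{p ∈ P} (p + C)`.  Then `Λ_W` and `Λ_C` agree over
`μ⁻¹(C_P)`. -/
theorem window_skeleton_eq_GIT_skeleton_over_stable_region
    {N k : ℕ} (hk : 1 ≤ k) (hNk : k ≤ N)
    (μ : (Fin N → ℝ) →ₗ[ℝ] (Fin k → ℝ))
    (hsurj : Function.Surjective μ)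
    (hlat : ∀ w : Fin N → ℤ, ∀ j, ∃ n : ℤ, μ (fun i => (w i : ℝ)) j = (n : ℝ))
    (β : Fin N → (Fin k → ℝ)) (hβ : ∀ i, β i = μ (Pi.single i 1))
    (hβ0 : ∀ i, β i ≠ 0)
    (hspan : Submodule.span ℝ (Set.range β) = ⊤)
    (P : Set (Fin k → ℝ))
    (hP : ∃ S : Finset (Fin k → ℝ), S.Nonempty ∧ P = convexHull ℝ (S : Set (Fin k → ℝ)))
    -- `P` is large enough: every half-space zonotope `∇_H` fits into `P` after translation
    (hlarge : ∀ f : (Fin k → ℝ) →ₗ[ℝ] ℝ, f ≠ 0 → (∀ i, f (β i) ≠ 0) →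
      ∃ s : Fin k → ℝ,
        {s} + ∑ i ∈ Finset.univ.filter (fun i => f (β i) ≤ 0), segment ℝ 0 (β i) ⊆ P)
    (C : Set (Fin k → ℝ)) (hC : IsGKZChamber μ C) :
    LambdaWin μ (P ∩ {v | ∀ j, ∃ n : ℤ, v j = (n : ℝ)}) ∩
        ((μ ⁻¹' {x | ∀ p ∈ P, x - p ∈ C}) ×ˢ (Set.univ : Set (Fin N → ℝ))) =
      LambdaGIT μ C ∩
        ((μ ⁻¹' {x | ∀ p ∈ P, x - p ∈ C}) ×ˢ (Set.univ : Set (Fin N → ℝ))) := by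
  classical
  have hN : 0 < N := lt_of_lt_of_le hk hNk
  ext q
  obtain ⟨x, ξ⟩ := q
  simp only [Set.mem_inter_iff, Set.mem_prod, Set.mem_univ, and_true, Set.mem_preimage]
  constructor
  · rintro ⟨hWin, hbase⟩
    refine ⟨?_, hbase⟩
    simp only [LambdaWin, Set.mem_iUnion] at hWin
    obtain ⟨w, hμw, hΛ⟩ := hWin
    have hΛ' : ∀ i, (0 < x i - (w i : ℝ) ∧ ξ i = 0) ∨ (x i - (w i : ℝ) = 0 ∧ ξ i ≤ 0) :=
      fun i => hΛ i
    set I : Set (Fin N) := {i | 0 < x i - (w i : ℝ)} with hI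
    have hμwr : μ (fun i => ((w i : ℝ))) ∈ P := hμw.1
    have hIdx : I ∈ chamberIdx μ C := by
      refine ⟨fun i => x i - (w i : ℝ), ?_, ?_⟩
      · have heq : (fun i => x i - (w i : ℝ)) = x - (fun i => ((w i : ℝ))) := rfl
        rw [Set.mem_preimage, heq, map_sub]
        exact hbase _ hμwr
      · intro i
        constructor
        · intro hi
          exact hi
        · intro hi
          rcases hΛ' i with h | h
          · exact absurd h.1 hi
          · exact h.1
    simp only [LambdaGIT, Set.mem_iUnion]
    refine ⟨I, hIdx, ?_, ?_, ?_⟩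
    · intro i hi
      rcases hΛ' i with h | h
      · exact absurd h.1 hi
      · exact ⟨w i, by linarith [h.1]⟩
    · intro i hi
      rcases hΛ' i with h | h
      · exact h.2
      · exact absurd (show (0:ℝ) < x i - (w i : ℝ) from hi)
          (by rw [h.1]; exact lt_irrefl 0)
    · intro i hi
      rcases hΛ' i with h | h
      · exact absurd h.1 hi
      · exact h.2
  · rintro ⟨hGIT, hbase⟩
    refine ⟨?_, hbase⟩
    simp only [LambdaGIT, Set.mem_iUnion] at hGIT
    obtain ⟨I, hIdx, hint', hξ0', hξneg'⟩ := hGIT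
    have hint : ∀ i, i ∉ I → ∃ n : ℤ, x i = (n : ℝ) := hint'
    have hξ0 : ∀ i, i ∈ I → ξ i = 0 := hξ0'
    have hξneg : ∀ i, i ∉ I → ξ i ≤ 0 := hξneg'
    set c : Fin N → ℝ := fun i => if i ∈ I then Int.fract (x i) else 0 with hc
    obtain ⟨n, p, hpP, hnI, hyeq⟩ := hard_step hN μ β hβ hβ0 P hlarge C hC I hIdx (μ x) hbase c
      (fun i => by
        by_cases h : i ∈ I
        · simp only [hc, if_pos h]; exact Int.fract_nonneg _
        · simp [hc, h])
      (fun i => by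
        by_cases h : i ∈ I
        · simp only [hc, if_pos h]; exact Int.fract_lt_one _
        · simp [hc, h])
      (fun i hi => by simp [hc, hi])
    set w : Fin N → ℤ := fun i => ⌊x i⌋ - (n i : ℤ) with hw
    have hwr : ∀ i, ((w i : ℝ)) = x i - (c i + (n i : ℝ)) := by
      intro i
      by_cases h : i ∈ I
      · have hfr : c i = Int.fract (x i) := by simp [hc, h]
        have := Int.self_sub_fract (x i)
        rw [hw]
        push_cast
        rw [hfr]
        linarith
      · obtain ⟨m, hm⟩ := hint i h
        have hc0 : c i = 0 := by simp [hc, h]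
        have hn0 : n i = 0 := hnI i h
        rw [hw]
        push_cast
        rw [hc0, hn0, hm, Int.floor_intCast]
        simp
    simp only [LambdaWin, Set.mem_iUnion]
    refine ⟨w, ⟨?_, hlat w⟩, ?_⟩
    · have heq : (fun i => ((w i : ℝ))) = x - (fun i => c i + (n i : ℝ)) := by
        funext i
        rw [hwr i]
        rfl
      rw [heq, map_sub, mu_apply μ β hβ (fun i => c i + (n i : ℝ)), hyeq]
      have : p + ∑ i, (c i + (n i : ℝ)) • β i - ∑ i, (c i + (n i : ℝ)) • β i = p := by abel
      rw [this]
      exact hpP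
    · intro i
      show (0 < x i - (w i : ℝ) ∧ ξ i = 0) ∨ (x i - (w i : ℝ) = 0 ∧ ξ i ≤ 0)
      have hxw : x i - (w i : ℝ) = c i + (n i : ℝ) := by rw [hwr i]; ring
      by_cases h : i ∈ I
      · have hξ : ξ i = 0 := hξ0 i h
        have hc00 : (0:ℝ) ≤ c i := by
          by_cases hh : i ∈ I
          · simp only [hc, if_pos hh]; exact Int.fract_nonneg _
          · simp [hc, hh]
        rcases eq_or_lt_of_le (add_nonneg hc00 (Nat.cast_nonneg (n i))) with heq0 | hlt
        · right
          constructor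
          · rw [hxw, ← heq0]
          · rw [hξ]
        · left
          exact ⟨by rw [hxw]; exact hlt, hξ⟩
      · right
        have hc0 : c i = 0 := by simp [hc, h]
        have hn0 : n i = 0 := hnI i h
        constructor
        · rw [hxw, hc0, hn0]; simp
        · exact hξneg i h
end
end

section
/- For every GKZ chamber C and every w ∈ ℤ^N, the translated quadrant skeleton lies in the GIT skeleton over the translated chamber: Λ_w ∩ (μ⁻¹(μ(w)+C) × ℝ^N) ⊆ Λ_C. -/
open Pointwise
open scoped Classical

noncomputable section

/-- **Lemma.** For any GKZ chamber `C` and any `w ∈ ℤ^N`, `Λ_w ⊆ Λ_C` over the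
translated chamber `μ(w) + C`. -/
theorem translated_quadrant_skeleton_subset_GIT_skeleton
    {N k : ℕ} (hk : 1 ≤ k) (hNk : k ≤ N)
    (μ : (Fin N → ℝ) →ₗ[ℝ] (Fin k → ℝ))
    (hsurj : Function.Surjective μ)
    (hlat : ∀ w : Fin N → ℤ, ∀ j, ∃ n : ℤ, μ (fun i => (w i : ℝ)) j = (n : ℝ))
    (β : Fin N → (Fin k → ℝ)) (hβ : ∀ i, β i = μ (Pi.single i 1))
    (hβ0 : ∀ i, β i ≠ 0)
    (hspan : Submodule.span ℝ (Set.range β) = ⊤)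
    (C : Set (Fin k → ℝ)) (hC : IsGKZChamber μ C)
    (w : Fin N → ℤ) :
    Lambdaw w ∩
        ((μ ⁻¹' {y | y - μ (fun i => (w i : ℝ)) ∈ C}) ×ˢ (Set.univ : Set (Fin N → ℝ)))
      ⊆ LambdaGIT μ C := by
  rintro ⟨x, ξ⟩ ⟨hl, hc, -⟩
  simp only [Lambdaw, Lambda0, Set.mem_setOf_eq] at hl
  simp only [Set.mem_preimage, Set.mem_setOf_eq] at hc
  refine Set.mem_iUnion₂.2 ⟨{i | 0 < x i - (w i : ℝ)}, ⟨fun i => x i - (w i : ℝ), ?_, ?_⟩, ?_, ?_, ?_⟩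
  · show μ (fun i => x i - (w i : ℝ)) ∈ C
    have : (fun i => x i - (w i : ℝ)) = x - (fun i => (w i : ℝ)) := rfl
    rw [this, map_sub]
    exact hc
  · intro i
    constructor
    · exact fun h => h
    · intro h
      rcases hl i with ⟨h1, _⟩ | ⟨h1, _⟩
      · exact absurd h1 h
      · exact h1
  · intro i hi
    rcases hl i with ⟨h1, _⟩ | ⟨h1, _⟩
    · exact absurd h1 hi
    · exact ⟨w i, by linarith⟩
  · intro i hi
    rcases hl i with ⟨_, h2⟩ | ⟨h1, _⟩
    · exact h2
    · exact absurd h1 (ne_of_gt hi)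
  · intro i hi
    rcases hl i with ⟨h1, _⟩ | ⟨_, h2⟩
    · exact absurd h1 hi
    · exact h2
end
end

section
/- Assume quasi-symmetry. Then for every closed half-space H ⊆ ℝ^k bounded by a hyperplane through 0 containing no β_i, one has ∑_{i : β_i∈H} [0,β_i] = (1/2)∑_{i : β_i∈H} β_i + ∇. In particular, for any two such half-spaces H₁, H₂ the zonotopes ∇_{H₁} = ∑_{β_i∈H₁}[0,β_i] and ∇_{H₂} differ by a translation, each being a translate of ∇. -/
open Pointwise
open scoped Classical

section Helpers

variable {V W : Type*} [AddCommGroup V] [Module ℝ V] [AddCommGroup W] [Module ℝ W]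

private lemma mem_seg_zero {y x : V} :
    x ∈ segment ℝ 0 y ↔ ∃ t : ℝ, 0 ≤ t ∧ t ≤ 1 ∧ x = t • y := by
  rw [segment_eq_image]
  constructor
  · rintro ⟨t, ⟨ht0, ht1⟩, rfl⟩
    exact ⟨t, ht0, ht1, by simp⟩
  · rintro ⟨t, ht0, ht1, rfl⟩
    exact ⟨t, ⟨ht0, ht1⟩, by simp⟩

private lemma seg_pair (v : V) {a b : ℝ} (ha : 0 ≤ a) (hb : 0 ≤ b) :
    segment ℝ 0 (a • v) + segment ℝ 0 (b • v) = segment ℝ 0 ((a + b) • v) := by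
  ext x
  rw [Set.mem_add]
  constructor
  · rintro ⟨y, hy, z, hz, rfl⟩
    obtain ⟨s, hs0, hs1, rfl⟩ := mem_seg_zero.mp hy
    obtain ⟨t, ht0, ht1, rfl⟩ := mem_seg_zero.mp hz
    rcases eq_or_lt_of_le (add_nonneg ha hb) with hab | hab
    · have ha0 : a = 0 := by linarith
      have hb0 : b = 0 := by linarith
      subst ha0; subst hb0
      exact mem_seg_zero.mpr ⟨0, le_refl 0, zero_le_one, by simp⟩
    · refine mem_seg_zero.mpr ⟨(s * a + t * b) / (a + b), ?_, ?_, ?_⟩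
      · exact div_nonneg (add_nonneg (mul_nonneg hs0 ha) (mul_nonneg ht0 hb)) hab.le
      · rw [div_le_one hab]
        nlinarith
      · have hc : (s * a + t * b) / (a + b) * (a + b) = s * a + t * b :=
          div_mul_cancel₀ _ hab.ne'
        simp only [smul_smul]
        rw [hc, ← add_smul]
  · intro hx
    obtain ⟨u, hu0, hu1, rfl⟩ := mem_seg_zero.mp hx
    refine ⟨u • (a • v), mem_seg_zero.mpr ⟨u, hu0, hu1, rfl⟩,
      u • (b • v), mem_seg_zero.mpr ⟨u, hu0, hu1, rfl⟩, ?_⟩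
    rw [← smul_add, ← add_smul]

private lemma seg_sum {ι : Type*} (s : Finset ι) (w : ι → V) (v : V)
    (hw : ∀ i ∈ s, ∃ t : ℝ, 0 ≤ t ∧ w i = t • v) :
    (∃ c : ℝ, 0 ≤ c ∧ ∑ i ∈ s, w i = c • v) ∧
      ∑ i ∈ s, segment ℝ 0 (w i) = segment ℝ 0 (∑ i ∈ s, w i) := by
  classical
  induction s using Finset.induction with
  | empty =>
      refine ⟨⟨0, le_refl 0, by simp⟩, ?_⟩
      simp [segment_same]
      rfl
  | insert a s hnot ih =>
      obtain ⟨⟨c, hc0, hcs⟩, hseg⟩ := ih (fun i hi => hw i (Finset.mem_insert_of_mem hi))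
      obtain ⟨t, ht0, hta⟩ := hw a (Finset.mem_insert_self a s)
      rw [Finset.sum_insert hnot, Finset.sum_insert hnot, hseg, hcs, hta,
        seg_pair v ht0 hc0, ← add_smul]
      exact ⟨⟨t + c, add_nonneg ht0 hc0, rfl⟩, rfl⟩

private lemma image_setsum {ι : Type*} (m : V →ₗ[ℝ] W) (s : Finset ι) (S : ι → Set V) :
    m '' (∑ i ∈ s, S i) = ∑ i ∈ s, m '' (S i) := by
  classical
  induction s using Finset.induction with
  | empty => simp [Set.image_singleton]; rfl
  | insert a s hnot ih =>
      rw [Finset.sum_insert hnot, Finset.sum_insert hnot, Set.image_add, ih]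

private lemma core {ι : Type*} [Fintype ι] (γ : ι → V) (hγ0 : ∀ i, γ i ≠ 0)
    (hqs : ∀ i0 : ι,
      ∑ j ∈ Finset.univ.filter (fun j => γ j ∈ Submodule.span ℝ {γ i0}), γ j = 0)
    (φ : V →ₗ[ℝ] ℝ) (hφ : ∀ i, φ (γ i) ≠ 0) :
    ∑ i ∈ Finset.univ.filter (fun i => φ (γ i) ≤ 0), segment ℝ 0 (-γ i) =
      ∑ j ∈ Finset.univ.filter (fun j => ¬ φ (γ j) ≤ 0), segment ℝ 0 (γ j) := by
  classical
  set g : ι → Submodule ℝ V := fun i => Submodule.span ℝ {γ i} with hg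
  have hmaps : ∀ (s : Finset ι), ∀ i ∈ s, g i ∈ Finset.univ.image g :=
    fun s i _ => Finset.mem_image_of_mem g (Finset.mem_univ i)
  rw [← Finset.sum_fiberwise_of_maps_to (hmaps _) (fun i => segment ℝ 0 (-γ i)),
    ← Finset.sum_fiberwise_of_maps_to (hmaps _) (fun j => segment ℝ 0 (γ j))]
  refine Finset.sum_congr rfl ?_
  intro L hL
  obtain ⟨i0, -, rfl⟩ := Finset.mem_image.mp hL
  -- a generator of the line with positive φ-value
  obtain ⟨v, hv, hvL⟩ : ∃ v : V, 0 < φ v ∧ Submodule.span ℝ {v} = g i0 := by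
    rcases lt_or_ge 0 (φ (γ i0)) with h | h
    · exact ⟨γ i0, h, rfl⟩
    · refine ⟨-γ i0, ?_, ?_⟩
      · rw [map_neg]
        exact neg_pos.mpr (lt_of_le_of_ne h (hφ i0))
      · rw [show -γ i0 = (-1 : ℝ) • γ i0 by simp]
        exact Submodule.span_singleton_smul_eq isUnit_one.neg _
  have hmem : ∀ j, g j = g i0 → ∃ t : ℝ, γ j = t • v ∧ t ≠ 0 := by
    intro j hj
    have hjv : γ j ∈ Submodule.span ℝ ({v} : Set V) := by
      rw [hvL, ← hj]
      exact Submodule.mem_span_singleton_self _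
    obtain ⟨t, ht⟩ := Submodule.mem_span_singleton.mp hjv
    refine ⟨t, ht.symm, ?_⟩
    rintro rfl
    rw [zero_smul] at ht
    exact hγ0 j ht.symm
  have hfib : ∀ j, γ j ∈ g i0 ↔ g j = g i0 := by
    intro j
    constructor
    · intro h
      obtain ⟨t, ht⟩ := Submodule.mem_span_singleton.mp h
      have ht0 : t ≠ 0 := by
        rintro rfl
        rw [zero_smul] at ht
        exact hγ0 j ht.symm
      rw [hg]
      dsimp only
      rw [← ht]
      exact Submodule.span_singleton_smul_eq (isUnit_iff_ne_zero.mpr ht0) _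
    · intro h
      rw [← h]
      exact Submodule.mem_span_singleton_self _
  have hsum0 : ∑ j ∈ Finset.univ.filter (fun j => g j = g i0), γ j = 0 := by
    rw [show Finset.univ.filter (fun j => g j = g i0)
        = Finset.univ.filter (fun j => γ j ∈ Submodule.span ℝ {γ i0}) from
      Finset.filter_congr (fun j _ => (hfib j).symm)]
    exact hqs i0
  -- signs on the fiber
  have hM : ∀ j ∈ (Finset.univ.filter (fun i => φ (γ i) ≤ 0)).filter (fun i => g i = g i0),
      ∃ t : ℝ, 0 ≤ t ∧ -γ j = t • v := by
    intro j hj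
    simp only [Finset.mem_filter, Finset.mem_univ, true_and] at hj
    obtain ⟨t, htv, ht0⟩ := hmem j hj.2
    refine ⟨-t, ?_, by rw [htv, neg_smul]⟩
    have : t * φ v ≤ 0 := by rw [← smul_eq_mul, ← map_smul, ← htv]; exact hj.1
    nlinarith [hv]
  have hP : ∀ j ∈ (Finset.univ.filter (fun i => ¬ φ (γ i) ≤ 0)).filter (fun i => g i = g i0),
      ∃ t : ℝ, 0 ≤ t ∧ γ j = t • v := by
    intro j hj
    simp only [Finset.mem_filter, Finset.mem_univ, true_and] at hj
    obtain ⟨t, htv, ht0⟩ := hmem j hj.2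
    refine ⟨t, ?_, htv⟩
    have h1 : ¬ t * φ v ≤ 0 := by rw [← smul_eq_mul, ← map_smul, ← htv]; exact hj.1
    nlinarith [hv]
  obtain ⟨-, hMseg⟩ := seg_sum _ _ v hM
  obtain ⟨-, hPseg⟩ := seg_sum _ _ v hP
  rw [hMseg, hPseg]
  have hsplit : ∑ j ∈ (Finset.univ.filter (fun i => φ (γ i) ≤ 0)).filter (fun i => g i = g i0), γ j
      + ∑ j ∈ (Finset.univ.filter (fun i => ¬ φ (γ i) ≤ 0)).filter (fun i => g i = g i0), γ j
      = 0 := by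
    rw [Finset.filter_comm, Finset.filter_comm (fun i => ¬ φ (γ i) ≤ 0),
      Finset.sum_filter_add_sum_filter_not]
    exact hsum0
  rw [Finset.sum_neg_distrib, eq_neg_of_add_eq_zero_right hsplit]

end Helpers

/-- **Lemma.** Under quasi-symmetry, for every generic closed half-space `H`
(bounded by a hyperplane through `0` containing no `β_i`), the half-space
zonotope `∇_H = ∑_{β_i ∈ H} [0, β_i]` equals the translate
`(1/2)∑_{β_i ∈ H} β_i + ∇` of the central zonotope `∇ = (1/2)∑_i [0, β_i]`;
in particular any two such `∇_H` differ by a translation. -/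
theorem halfspace_zonotope_is_translate_of_nabla
    {N k : ℕ} (hk : 1 ≤ k) (hNk : k ≤ N)
    (μ : (Fin N → ℝ) →ₗ[ℝ] (Fin k → ℝ))
    (hsurj : Function.Surjective μ)
    (β : Fin N → (Fin k → ℝ)) (hβ : ∀ i, β i = μ (Pi.single i 1))
    (hβ0 : ∀ i, β i ≠ 0)
    (hspan : Submodule.span ℝ (Set.range β) = ⊤)
    -- quasi-symmetry: for every 1-dimensional subspace `L`, `∑_{β_i ∈ L} β_i = 0`
    (hqs : ∀ L : Submodule ℝ (Fin k → ℝ), Module.finrank ℝ L = 1 →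
      ∑ i ∈ Finset.univ.filter (fun i => β i ∈ L), β i = 0)
    (f : (Fin k → ℝ) →ₗ[ℝ] ℝ) (hf : f ≠ 0) (hfβ : ∀ i, f (β i) ≠ 0) :
    ∑ i ∈ Finset.univ.filter (fun i => f (β i) ≤ 0), segment ℝ 0 (β i) =
      {(2⁻¹ : ℝ) • ∑ i ∈ Finset.univ.filter (fun i => f (β i) ≤ 0), β i} +
        (2⁻¹ : ℝ) • ∑ i : Fin N, segment ℝ 0 (β i) := by
  classical
  set M : Finset (Fin N) := Finset.univ.filter (fun i => f (β i) ≤ 0) with hMdef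
  set P : Finset (Fin N) := Finset.univ.filter (fun i => ¬ f (β i) ≤ 0) with hPdef
  have hcore : ∑ i ∈ M, segment ℝ 0 (-β i) = ∑ j ∈ P, segment ℝ 0 (β j) :=
    core β hβ0 (fun i0 => hqs _ (finrank_span_singleton (hβ0 i0))) f hfβ
  -- the halving linear map
  set m : (Fin k → ℝ) →ₗ[ℝ] (Fin k → ℝ) := (2⁻¹ : ℝ) • LinearMap.id with hmdef
  have hm : ∀ x : (Fin k → ℝ), m x = (2⁻¹ : ℝ) • x := fun x => rfl
  have him : ∀ S : Set (Fin k → ℝ), (2⁻¹ : ℝ) • S = m '' S := by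
    intro S
    rw [← Set.image_smul]
    exact congrArg (· '' S) (funext fun x => (hm x).symm)
  have hsegm : ∀ y : (Fin k → ℝ), m '' segment ℝ 0 y = segment ℝ 0 ((2⁻¹ : ℝ) • y) := by
    intro y
    have := image_segment ℝ m.toAffineMap 0 y
    simpa [hm] using this
  -- scaled core identity
  have hcore2 : ∑ i ∈ M, segment ℝ 0 (-((2⁻¹ : ℝ) • β i))
      = ∑ j ∈ P, segment ℝ 0 ((2⁻¹ : ℝ) • β j) := by
    have := congrArg (fun S => m '' S) hcore
    rw [image_setsum, image_setsum] at this
    simp only [hsegm] at this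
    simpa [smul_neg] using this
  -- step A : the scaled zonotope
  have h1 : (2⁻¹ : ℝ) • ∑ i : Fin N, segment ℝ 0 (β i)
      = ∑ i ∈ M, segment ℝ 0 ((2⁻¹ : ℝ) • β i)
        + ∑ i ∈ M, segment ℝ 0 (-((2⁻¹ : ℝ) • β i)) := by
    rw [him, image_setsum]
    simp only [hsegm]
    rw [← Finset.sum_filter_add_sum_filter_not Finset.univ (fun i => f (β i) ≤ 0)
      (fun i => segment ℝ 0 ((2⁻¹ : ℝ) • β i)), ← hcore2]
  -- step B : singleton of the sum
  have h2 : ({(2⁻¹ : ℝ) • ∑ i ∈ M, β i} : Set (Fin k → ℝ))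
      = ∑ i ∈ M, ({(2⁻¹ : ℝ) • β i} : Set (Fin k → ℝ)) := by
    rw [Finset.smul_sum]
    have h := map_sum (Set.singletonAddMonoidHom (α := (Fin k → ℝ))) (fun i => (2⁻¹ : ℝ) • β i) M
    simp only [Set.singletonAddMonoidHom_apply] at h
    exact h
  -- per-term lemmas
  have hterm : ∀ a : (Fin k → ℝ), ({a} : Set (Fin k → ℝ)) + segment ℝ 0 (-a) = segment ℝ 0 a := by
    intro a
    have h := vadd_segment (𝕜 := ℝ) a (0 : (Fin k → ℝ)) (-a)
    simp only [vadd_eq_add, add_zero, add_neg_cancel] at h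
    rw [Set.singleton_add]
    calc (fun x => a + x) '' segment ℝ 0 (-a) = a +ᵥ segment ℝ 0 (-a) := rfl
      _ = segment ℝ a 0 := h
      _ = segment ℝ 0 a := segment_symm ℝ a 0
  have hdbl : ∀ y : (Fin k → ℝ), segment ℝ 0 ((2⁻¹ : ℝ) • y) + segment ℝ 0 ((2⁻¹ : ℝ) • y)
      = segment ℝ 0 y := by
    intro y
    have h := seg_pair y (a := (2⁻¹ : ℝ)) (b := (2⁻¹ : ℝ)) (by norm_num) (by norm_num)
    rw [show (2⁻¹ : ℝ) + 2⁻¹ = 1 by norm_num, one_smul] at h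
    exact h
  -- assemble
  symm
  calc ({(2⁻¹ : ℝ) • ∑ i ∈ M, β i} : Set (Fin k → ℝ)) + (2⁻¹ : ℝ) • ∑ i : Fin N, segment ℝ 0 (β i)
      = ∑ i ∈ M, ({(2⁻¹ : ℝ) • β i} : Set (Fin k → ℝ))
        + (∑ i ∈ M, segment ℝ 0 ((2⁻¹ : ℝ) • β i)
          + ∑ i ∈ M, segment ℝ 0 (-((2⁻¹ : ℝ) • β i))) := by rw [h1, h2]
    _ = (∑ i ∈ M, ({(2⁻¹ : ℝ) • β i} : Set (Fin k → ℝ))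
          + ∑ i ∈ M, segment ℝ 0 (-((2⁻¹ : ℝ) • β i)))
        + ∑ i ∈ M, segment ℝ 0 ((2⁻¹ : ℝ) • β i) := by
          rw [← add_assoc, add_right_comm]
    _ = ∑ i ∈ M, (({(2⁻¹ : ℝ) • β i} : Set (Fin k → ℝ)) + segment ℝ 0 (-((2⁻¹ : ℝ) • β i)))
        + ∑ i ∈ M, segment ℝ 0 ((2⁻¹ : ℝ) • β i) := by
          rw [← Finset.sum_add_distrib]
    _ = ∑ i ∈ M, segment ℝ 0 ((2⁻¹ : ℝ) • β i)
        + ∑ i ∈ M, segment ℝ 0 ((2⁻¹ : ℝ) • β i) := by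
          rw [Finset.sum_congr rfl (fun i _ => hterm ((2⁻¹ : ℝ) • β i))]
    _ = ∑ i ∈ M, (segment ℝ 0 ((2⁻¹ : ℝ) • β i) + segment ℝ 0 ((2⁻¹ : ℝ) • β i)) := by
          rw [← Finset.sum_add_distrib]
    _ = ∑ i ∈ M, segment ℝ 0 (β i) := Finset.sum_congr rfl (fun i _ => hdbl (β i))
end

section
/- (Intermediate-level window criterion.) Let K ⊆ ℝ^m be a nonempty convex set, ṽ ∈ ℤ^N, and I ⊆ {1,…,N}. Then the following are equivalent: (a) there exists w ∈ ℤ^N with π(w) ∈ K + 𝔹, with w_i < ṽ_i for every i ∈ I and w_i = ṽ_i for every i ∉ I; (b) K ∩ (π(ṽ) + 𝔹 − π(τ_I) − π(e_I)) ≠ ∅. -/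
open Pointwise
open scoped Classical

lemma round_lemma {α : Type*} [DecidableEq α] (b : α → ℝ) (η : ℝ)
    (J : Finset α) (hb : ∀ j ∈ J, |b j| ≤ η) :
    ∀ s : ℝ,
      -(η/2) + (∑ j ∈ J.filter (fun j => b j < 0), b j) ≤ s →
      s ≤ η/2 + ∑ j ∈ J.filter (fun j => 0 < b j), b j →
      ∃ c : α → ℤ, (∀ j, c j = 0 ∨ c j = 1) ∧
        |s - ∑ j ∈ J, b j * (c j : ℝ)| ≤ η/2 := by
  classical
  induction J using Finset.induction_on with
  | empty =>
      intro s h1 h2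
      refine ⟨fun _ => 0, fun _ => Or.inl rfl, ?_⟩
      simp only [Finset.filter_empty, Finset.sum_empty] at h1 h2 ⊢
      rw [abs_le]; constructor <;> linarith
  | @insert a J ha ih =>
      intro s h1 h2
      have hba := abs_le.mp (hb a (Finset.mem_insert_self a J))
      have hb' : ∀ j ∈ J, |b j| ≤ η := fun j hj => hb j (Finset.mem_insert_of_mem hj)
      have hanp : a ∉ J.filter (fun j => 0 < b j) := fun h => ha (Finset.mem_of_mem_filter a h)
      have hann : a ∉ J.filter (fun j => b j < 0) := fun h => ha (Finset.mem_of_mem_filter a h)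
      set P := ∑ j ∈ J.filter (fun j => 0 < b j), b j with hP
      set Q := ∑ j ∈ J.filter (fun j => b j < 0), b j with hQ
      have hP0 : 0 ≤ P := Finset.sum_nonneg (fun j hj => le_of_lt (Finset.mem_filter.mp hj).2)
      have hQ0 : Q ≤ 0 := Finset.sum_nonpos (fun j hj => le_of_lt (Finset.mem_filter.mp hj).2)
      have hPins : ∑ j ∈ (insert a J).filter (fun j => 0 < b j), b j
          = (if 0 < b a then b a else 0) + P := by
        rw [Finset.filter_insert]
        split
        · rw [Finset.sum_insert hanp]
        · rw [zero_add]
      have hQins : ∑ j ∈ (insert a J).filter (fun j => b j < 0), b j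
          = (if b a < 0 then b a else 0) + Q := by
        rw [Finset.filter_insert]
        split
        · rw [Finset.sum_insert hann]
        · rw [zero_add]
      rw [hPins] at h2
      rw [hQins] at h1
      have hsum : ∀ (c : α → ℤ) (k : ℤ),
          ∑ j ∈ insert a J, b j * ((Function.update c a k j : ℤ) : ℝ)
            = b a * (k : ℝ) + ∑ j ∈ J, b j * (c j : ℝ) := by
        intro c k
        rw [Finset.sum_insert ha, Function.update_self]
        congr 1
        exact Finset.sum_congr rfl fun j hj => by
          rw [Function.update_of_ne (fun h => ha (by rwa [h] at hj))]
      have hupd01 : ∀ (c : α → ℤ) (k : ℤ), (∀ j, c j = 0 ∨ c j = 1) → (k = 0 ∨ k = 1) →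
          ∀ j, Function.update c a k j = 0 ∨ Function.update c a k j = 1 := by
        intro c k hc hk j
        by_cases h : j = a
        · subst h; rw [Function.update_self]; exact hk
        · rw [Function.update_of_ne h]; exact hc j
      by_cases hup : s ≤ η/2 + P
      · by_cases hdown : -(η/2) + Q ≤ s
        · obtain ⟨c, hc01, hc⟩ := ih hb' s hdown hup
          refine ⟨Function.update c a 0, hupd01 c 0 hc01 (Or.inl rfl), ?_⟩
          rw [hsum]; push_cast; rw [mul_zero, zero_add]; exact hc
        · push_neg at hdown
          have hbneg : b a < 0 := by
            by_contra hnn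
            rw [if_neg hnn, zero_add] at h1
            linarith
          rw [if_pos hbneg] at h1
          have hl : -(η/2) + Q ≤ s - b a := by linarith
          have hu : s - b a ≤ η/2 + P := by linarith
          obtain ⟨c, hc01, hc⟩ := ih hb' (s - b a) hl hu
          refine ⟨Function.update c a 1, hupd01 c 1 hc01 (Or.inr rfl), ?_⟩
          rw [hsum]; push_cast; rw [mul_one]
          rw [show s - (b a + ∑ j ∈ J, b j * (c j : ℝ)) = (s - b a) - ∑ j ∈ J, b j * (c j : ℝ) by ring]
          exact hc
      · push_neg at hup
        have hbpos : 0 < b a := by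
          by_contra hnn
          rw [if_neg hnn, zero_add] at h2
          linarith
        rw [if_pos hbpos] at h2
        have hl : -(η/2) + Q ≤ s - b a := by linarith
        have hu : s - b a ≤ η/2 + P := by linarith
        obtain ⟨c, hc01, hc⟩ := ih hb' (s - b a) hl hu
        refine ⟨Function.update c a 1, hupd01 c 1 hc01 (Or.inr rfl), ?_⟩
        rw [hsum]; push_cast; rw [mul_one]
        rw [show s - (b a + ∑ j ∈ J, b j * (c j : ℝ)) = (s - b a) - ∑ j ∈ J, b j * (c j : ℝ) by ring]
        exact hc

/-- **Proposition (intermediate-level window criterion).**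
In the intermediate (balanced block) setup, for a nonempty convex `K ⊆ ℝ^m`,
`ṽ ∈ ℤ^N` and `I ⊆ {1,…,N}`, there exists `w ∈ ℤ^N` with `π(w) ∈ K + 𝔹`,
`w_i < ṽ_i` for `i ∈ I` and `w_i = ṽ_i` for `i ∉ I`, if and only if
`K ∩ (π(ṽ) + 𝔹 − π(τ_I) − π(e_I)) ≠ ∅`. -/
theorem intermediate_window_criterion
    {N m : ℕ}
    -- block structure: `blk j` is the block of index `j`, with weight `b j`
    (blk : Fin N → Fin m) (b : Fin N → ℤ)
    (hb0 : ∀ j, b j ≠ 0)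
    (hbal : ∀ i : Fin m, ∑ j ∈ Finset.univ.filter (fun j => blk j = i), b j = 0)
    (π : (Fin N → ℝ) →ₗ[ℝ] (Fin m → ℝ))
    (hπ : ∀ (x : Fin N → ℝ) (i : Fin m),
      π x i = ∑ j ∈ Finset.univ.filter (fun j => blk j = i), (b j : ℝ) * x j)
    (η : Fin m → ℝ)
    (hη : ∀ i, η i = ∑ j ∈ Finset.univ.filter (fun j => blk j = i ∧ 0 < b j), (b j : ℝ))
    (hηpos : ∀ i, 0 < η i)
    (K : Set (Fin m → ℝ)) (hKne : K.Nonempty) (hKconv : Convex ℝ K)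
    (v : Fin N → ℤ) (I : Finset (Fin N)) :
    (∃ w : Fin N → ℤ,
        (∃ y ∈ K, ∃ bb : Fin m → ℝ,
          (∀ i, -(η i) / 2 ≤ bb i ∧ bb i ≤ η i / 2) ∧
          π (fun j => (w j : ℝ)) = y + bb) ∧
        (∀ i ∈ I, w i < v i) ∧ (∀ i ∉ I, w i = v i)) ↔
      (∃ y ∈ K, ∃ bb : Fin m → ℝ,
        (∀ i, -(η i) / 2 ≤ bb i ∧ bb i ≤ η i / 2) ∧
        ∃ t : Fin N → ℝ, (∀ j, 0 ≤ t j) ∧ (∀ j, j ∉ I → t j = 0) ∧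
          y = π (fun j => (v j : ℝ)) + bb - π t
              - π (fun j => if j ∈ I then (1 : ℝ) else 0)) := by
  classical
  constructor
  · -- FORWARD
    rintro ⟨w, ⟨y, hy, bb, hbb, heq⟩, hlt, heqI⟩
    refine ⟨y, hy, fun i => -bb i,
      fun i => ⟨by have := (hbb i).2; simp; linarith, by have := (hbb i).1; simp; linarith⟩,
      fun j => if j ∈ I then ((v j - w j - 1 : ℤ) : ℝ) else 0, ?_, ?_, ?_⟩
    · intro j
      by_cases hj : j ∈ I
      · have h := hlt j hj
        simp only [hj, if_true]
        exact_mod_cast (by omega : (0:ℤ) ≤ v j - w j - 1)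
      · simp only [hj, if_false]; exact le_refl 0
    · intro j hj; simp [hj]
    · have hwfun : (fun j => ((w j : ℤ) : ℝ))
          = (fun j => ((v j : ℤ) : ℝ))
            - (fun j => if j ∈ I then ((v j - w j - 1 : ℤ) : ℝ) else 0)
            - (fun j => if j ∈ I then (1 : ℝ) else 0) := by
        funext j
        by_cases hj : j ∈ I
        · simp only [Pi.sub_apply, if_pos hj]; push_cast; ring
        · simp only [Pi.sub_apply, if_neg hj, heqI j hj]; ring
      rw [hwfun, map_sub, map_sub] at heq
      funext i
      have h := congrFun heq i
      simp only [Pi.add_apply, Pi.sub_apply] at h ⊢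
      linarith
  · -- BACKWARD
    rintro ⟨y, hy, bb, hbb, t, ht0, htI, hyeq⟩
    -- the intersected block sets
    set J : Fin m → Finset (Fin N) :=
      fun i => Finset.univ.filter (fun j => blk j = i ∧ j ∈ I) with hJ
    -- |b j| ≤ η i on block i
    have hbabs : ∀ i, ∀ j, blk j = i → |(b j : ℝ)| ≤ η i := by
      intro i j hji
      have hsplit : ∑ j ∈ (Finset.univ.filter (fun j => blk j = i)).filter (fun j => 0 < b j), (b j : ℝ)
          + ∑ j ∈ (Finset.univ.filter (fun j => blk j = i)).filter (fun j => ¬ 0 < b j), (b j : ℝ)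
          = 0 := by
        rw [Finset.sum_filter_add_sum_filter_not]
        exact_mod_cast hbal i
      have hηeq : η i = ∑ j ∈ (Finset.univ.filter (fun j => blk j = i)).filter (fun j => 0 < b j), (b j : ℝ) := by
        rw [hη, Finset.filter_filter]
      rcases lt_or_gt_of_ne (hb0 j) with hneg | hpos
      · -- b j < 0
        have hcast : ((b j : ℤ) : ℝ) ≤ 0 := by exact_mod_cast hneg.le
        rw [abs_of_nonpos hcast]
        have hmem : j ∈ (Finset.univ.filter (fun j => blk j = i)).filter (fun j => ¬ 0 < b j) := by
          simp only [Finset.mem_filter, Finset.mem_univ, true_and]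
          exact ⟨hji, not_lt.mpr hneg.le⟩
        have hsingle : -(b j : ℝ) ≤ ∑ k ∈ (Finset.univ.filter (fun j => blk j = i)).filter (fun j => ¬ 0 < b j), -(b k : ℝ) := by
          apply Finset.single_le_sum (f := fun k => -(b k : ℝ)) _ hmem
          intro k hk
          have h2 := (Finset.mem_filter.mp hk).2
          simp only [not_lt] at h2
          have h3 : (b k : ℝ) ≤ 0 := by exact_mod_cast h2
          show (0:ℝ) ≤ -((b k : ℤ) : ℝ)
          linarith
        rw [Finset.sum_neg_distrib] at hsingle
        rw [hηeq]
        linarith [hsplit]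
      · -- 0 < b j
        rw [abs_of_nonneg (by exact_mod_cast hpos.le)]
        rw [hηeq]
        apply Finset.single_le_sum (f := fun k => ((b k : ℤ) : ℝ))
        · intro k hk
          have := (Finset.mem_filter.mp hk).2
          exact_mod_cast this.le
        · simp [hji, hpos]
    -- bounds for s_i and the rounding
    have key : ∀ i : Fin m, ∃ c : Fin N → ℤ, (∀ j, c j = 0 ∨ c j = 1) ∧
        |(-bb i + ∑ j ∈ J i, (b j : ℝ) * Int.fract (t j))
          - ∑ j ∈ J i, (b j : ℝ) * (c j : ℝ)| ≤ η i / 2 := by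
      intro i
      apply round_lemma (fun j => (b j : ℝ)) (η i) (J i)
      · intro j hj
        exact hbabs i j ((Finset.mem_filter.mp hj).2.1)
      · -- lower bound
        have hlow : ∑ j ∈ (J i).filter (fun j => (b j : ℝ) < 0), (b j : ℝ)
            ≤ ∑ j ∈ J i, (b j : ℝ) * Int.fract (t j) := by
          rw [Finset.sum_filter]
          apply Finset.sum_le_sum
          intro j hj
          by_cases hbj : (b j : ℝ) < 0
          · rw [if_pos hbj]
            have h1 : Int.fract (t j) ≤ 1 := (Int.fract_lt_one (t j)).le
            nlinarith
          · rw [if_neg hbj]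
            push_neg at hbj
            have := Int.fract_nonneg (t j)
            positivity
        have := (hbb i).1
        have : -(η i) / 2 ≤ -bb i := by linarith [(hbb i).2]
        linarith [hlow, (hbb i).2, neg_div 2 (η i)]
      · -- upper bound
        have hup : ∑ j ∈ J i, (b j : ℝ) * Int.fract (t j)
            ≤ ∑ j ∈ (J i).filter (fun j => 0 < (b j : ℝ)), (b j : ℝ) := by
          conv_rhs => rw [Finset.sum_filter]
          apply Finset.sum_le_sum
          intro j hj
          by_cases hbj : 0 < (b j : ℝ)
          · rw [if_pos hbj]
            have h1 : Int.fract (t j) ≤ 1 := (Int.fract_lt_one (t j)).le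
            nlinarith
          · rw [if_neg hbj]
            push_neg at hbj
            have := Int.fract_nonneg (t j)
            nlinarith
        linarith [(hbb i).1, neg_div 2 (η i)]
    choose c hc01 hcbd using key
    -- global rounding and the integer point
    set C : Fin N → ℤ := fun j => c (blk j) j with hC
    set w : Fin N → ℤ := fun j => if j ∈ I then v j - ⌊t j⌋ - C j - 1 else v j with hw
    set bb2 : Fin m → ℝ := fun i =>
      (-bb i + ∑ j ∈ J i, (b j : ℝ) * Int.fract (t j)) - ∑ j ∈ J i, (b j : ℝ) * (c i j : ℝ)
      with hbb2
    have hbb2bd : ∀ i, -(η i) / 2 ≤ bb2 i ∧ bb2 i ≤ η i / 2 := by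
      intro i
      have := abs_le.mp (hcbd i)
      constructor
      · rw [neg_div]; exact this.1
      · exact this.2
    -- the correction function
    set d : Fin N → ℝ := fun j => if j ∈ I then ((⌊t j⌋ : ℝ) + (C j : ℝ)) else 0 with hd
    have hwfun : (fun j => ((w j : ℤ) : ℝ))
        = (fun j => ((v j : ℤ) : ℝ)) - d - (fun j => if j ∈ I then (1 : ℝ) else 0) := by
      funext j
      by_cases hj : j ∈ I
      · simp only [Pi.sub_apply, hw, hd, if_pos hj]; push_cast; ring
      · simp only [Pi.sub_apply, hw, hd, if_neg hj]; ring
    have hπtd : ∀ i, π (t - d) i = bb i + bb2 i := by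
      intro i
      rw [hπ]
      have hstep : ∀ j ∈ Finset.univ.filter (fun j => blk j = i),
          (b j : ℝ) * (t - d) j
            = if j ∈ I then (b j : ℝ) * (Int.fract (t j) - (c i j : ℝ)) else 0 := by
        intro j hj
        have hji : blk j = i := (Finset.mem_filter.mp hj).2
        by_cases hjI : j ∈ I
        · rw [if_pos hjI]
          simp only [Pi.sub_apply, hd, if_pos hjI, hC, hji]
          rw [← Int.self_sub_floor (t j)]
          ring
        · rw [if_neg hjI]
          simp only [Pi.sub_apply, hd, if_neg hjI, htI j hjI]
          ring
      rw [Finset.sum_congr rfl hstep, ← Finset.sum_filter, Finset.filter_filter]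
      have : Finset.univ.filter (fun j => blk j = i ∧ j ∈ I) = J i := rfl
      rw [this]
      simp only [hbb2, mul_sub, Finset.sum_sub_distrib]
      ring
    refine ⟨w, ⟨y, hy, bb2, hbb2bd, ?_⟩, ?_, ?_⟩
    · rw [hwfun, map_sub, map_sub, hyeq]
      funext i
      have h := hπtd i
      rw [map_sub] at h
      simp only [Pi.sub_apply, Pi.add_apply] at h ⊢
      linarith
    · intro j hj
      have h0 : 0 ≤ ⌊t j⌋ := Int.floor_nonneg.mpr (ht0 j)
      have h1 : 0 ≤ C j := by rcases hc01 (blk j) j with h | h <;> simp [hC, h]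
      simp only [hw, hj, if_true]
      omega
    · intro j hj
      simp only [hw, hj, if_false]
end

section
/- Assume quasi-symmetry and μ(ℤ^N) = ℤ^k. Let δ ∈ ℝ^k, ṽ ∈ ℤ^N, and I ⊆ {1,…,N}. Then there exists w ∈ ℤ^N with μ(w) ∈ δ + ∇, w_i < ṽ_i for every i ∈ I and w_i = ṽ_i for every i ∉ I, if and only if δ ∈ μ(ṽ) − β_I − C_I + ∇. -/
open Pointwise
open scoped Classical

lemma seg_mem_iff {E : Type*} [AddCommGroup E] [Module ℝ E] (b x : E) :
    x ∈ segment ℝ (0 : E) b ↔ ∃ t : ℝ, t ∈ Set.Icc (0:ℝ) 1 ∧ x = t • b := by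
  rw [segment_eq_image]
  constructor
  · rintro ⟨t, ht, rfl⟩; exact ⟨t, ht, by simp⟩
  · rintro ⟨t, ht, rfl⟩; exact ⟨t, ht, by simp⟩

lemma mem_nabla_iff {k N : ℕ} (β : Fin N → (Fin k → ℝ)) (x : Fin k → ℝ) :
    x ∈ (2⁻¹ : ℝ) • ∑ i : Fin N, segment ℝ 0 (β i) ↔
      ∃ t : Fin N → ℝ, (∀ i, t i ∈ Set.Icc (0:ℝ) 1) ∧ x = ∑ i, (t i / 2) • β i := by
  rw [Set.mem_smul_set]
  constructor
  · rintro ⟨y, hy, rfl⟩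
    rw [Set.mem_fintype_sum] at hy
    obtain ⟨g, hg, rfl⟩ := hy
    choose t ht hgt using fun i => (seg_mem_iff (β i) (g i)).1 (hg i)
    refine ⟨t, ht, ?_⟩
    rw [Finset.smul_sum]
    refine Finset.sum_congr rfl fun i _ => ?_
    rw [hgt i, smul_smul]
    congr 1; ring
  · rintro ⟨t, ht, rfl⟩
    refine ⟨∑ i, t i • β i, ?_, ?_⟩
    · rw [Set.mem_fintype_sum]
      exact ⟨fun i => t i • β i, fun i => (seg_mem_iff _ _).2 ⟨t i, ht i, rfl⟩, rfl⟩
    · rw [Finset.smul_sum]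
      exact Finset.sum_congr rfl fun i _ => by rw [smul_smul]; congr 1; ring

lemma ap_hits (r P m : ℝ) (hr : 0 < r) (hrP : r ≤ P) (hm : -(P/2) ≤ m) :
    ∃ n : ℕ, m - P/2 ≤ (n:ℝ) * r ∧ (n:ℝ) * r ≤ m + P/2 := by
  rcases le_or_gt m (P/2) with h | h
  · exact ⟨0, by push_cast; linarith, by push_cast; linarith⟩
  · have hx : 0 < m - P/2 := by linarith
    have hx0 : 0 ≤ (m - P/2)/r := by positivity
    refine ⟨⌈(m - P/2)/r⌉₊, ?_, ?_⟩
    · have h1 := Nat.le_ceil ((m - P/2)/r)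
      have := mul_le_mul_of_nonneg_right h1 hr.le
      rw [div_mul_cancel₀] at this
      · linarith
      · exact hr.ne'
    · have h2 := Nat.ceil_lt_add_one hx0
      have := mul_le_mul_of_nonneg_right h2.le hr.le
      rw [add_mul, div_mul_cancel₀ _ hr.ne', one_mul] at this
      linarith

lemma represent {ι : Type*} (A : Finset ι) (r : ι → ℝ) (P : ℝ) (hP : 0 < P)
    (hPpos : ∑ i ∈ A.filter (fun i => 0 < r i), r i = P)
    (hPneg : ∑ i ∈ A.filter (fun i => ¬ 0 < r i), r i = -P)
    (a : ℝ) (h1 : -(P/2) ≤ a) (h2 : a ≤ P/2) :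
    ∃ s : ι → ℝ, (∀ i, s i ∈ Set.Icc (0:ℝ) 1) ∧ ∑ i ∈ A, (s i / 2) * r i = a := by
  classical
  rcases le_or_gt 0 a with ha | ha
  · refine ⟨fun i => if 0 < r i then 2*a/P else 0, fun i => ?_, ?_⟩
    · dsimp only; split
      · constructor
        · positivity
        · rw [div_le_one hP]; linarith
      · simp
    · have : ∀ i ∈ A, ((if 0 < r i then 2*a/P else 0) / 2) * r i
          = if 0 < r i then (a/P) * r i else 0 := by
        intro i _; split <;> ring
      rw [Finset.sum_congr rfl this, ← Finset.sum_filter, ← Finset.mul_sum, hPpos]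
      field_simp
  · refine ⟨fun i => if 0 < r i then 0 else -(2*a)/P, fun i => ?_, ?_⟩
    · dsimp only; split
      · simp
      · constructor
        · have : (0:ℝ) ≤ -(2*a) := by linarith
          positivity
        · rw [div_le_one hP]; linarith
    · have : ∀ i ∈ A, ((if 0 < r i then 0 else -(2*a)/P) / 2) * r i
          = if ¬ 0 < r i then (-(a)/P) * r i else 0 := by
        intro i _
        rcases em (0 < r i) with h | h
        · simp [h]
        · simp only [h, if_neg, if_false, if_true, not_false_iff, if_pos]
          ring
      rw [Finset.sum_congr rfl this, ← Finset.sum_filter, ← Finset.mul_sum, hPneg]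
      field_simp

lemma line_lemma {ι : Type*} [DecidableEq ι] (A B : Finset ι) (hBA : B ⊆ A)
    (r : ι → ℝ) (hr : ∀ i ∈ A, r i ≠ 0) (hsum : ∑ i ∈ A, r i = 0)
    (c : ι → ℝ) (hc : ∀ i, 0 ≤ c i) (hc0 : ∀ i ∈ A, i ∉ B → c i = 0)
    (t : ι → ℝ) (ht : ∀ i, t i ∈ Set.Icc (0:ℝ) 1) :
    ∃ (n : ι → ℕ) (s : ι → ℝ), (∀ i, i ∉ B → n i = 0) ∧ (∀ i, s i ∈ Set.Icc (0:ℝ) 1) ∧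
      ∑ i ∈ A, ((c i - (n i : ℝ)) - t i / 2 - s i / 2) * r i = 0 := by
  classical
  by_cases hB : B.Nonempty
  swap
  · -- B empty
    refine ⟨fun _ => 0, fun i => if i ∈ A then 1 - t i else 0, fun _ _ => rfl, fun i => ?_, ?_⟩
    · dsimp only; split
      · exact ⟨by linarith [(ht i).2], by linarith [(ht i).1]⟩
      · simp
    · have : ∀ i ∈ A, ((c i - ((0:ℕ) : ℝ)) - t i / 2 - (if i ∈ A then 1 - t i else 0) / 2) * r i
          = (-(1/2)) * r i := by
        intro i hi
        rw [if_pos hi, hc0 i hi (fun h => hB ⟨i, h⟩)]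
        ring
      rw [Finset.sum_congr rfl this, ← Finset.mul_sum, hsum, mul_zero]
  -- B nonempty
  set pos := A.filter (fun i => 0 < r i) with hposdef
  set neg := A.filter (fun i => ¬ 0 < r i) with hnegdef
  set P := ∑ i ∈ pos, r i with hPdef
  have hsplit : P + ∑ i ∈ neg, r i = 0 := by
    rw [hPdef, hposdef, hnegdef, Finset.sum_filter_add_sum_filter_not]; exact hsum
  have hPneg : ∑ i ∈ neg, r i = -P := by linarith
  have hnegterm : ∀ i ∈ neg, r i < 0 := by
    intro i hi
    rcases Finset.mem_filter.mp hi with ⟨hiA, hn⟩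
    exact lt_of_le_of_ne (not_lt.mp hn) (hr i hiA)
  have hP : 0 < P := by
    obtain ⟨i0, hi0⟩ := hB
    have hi0A : i0 ∈ A := hBA hi0
    by_contra hP'
    push_neg at hP'
    rcases Finset.eq_empty_or_nonempty neg with hne | hne
    · have hi0pos : i0 ∈ pos := by
        rw [hposdef, Finset.mem_filter]
        refine ⟨hi0A, ?_⟩
        by_contra h
        exact absurd (Finset.mem_filter.mpr ⟨hi0A, h⟩) (by rw [← hnegdef, hne]; simp)
      have : 0 < P := Finset.sum_pos' (fun i hi => (Finset.mem_filter.mp hi).2.le)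
        ⟨i0, hi0pos, (Finset.mem_filter.mp hi0pos).2⟩
      linarith
    · have : ∑ i ∈ neg, r i < 0 := Finset.sum_neg hnegterm hne
      linarith
  set b := ∑ i ∈ A, (t i / 2) * r i with hbdef
  have hbsplit : b = ∑ i ∈ pos, (t i / 2) * r i + ∑ i ∈ neg, (t i / 2) * r i := by
    rw [hbdef, hposdef, hnegdef, Finset.sum_filter_add_sum_filter_not]
  have hb1 : b ≤ P/2 := by
    have h1 : ∑ i ∈ pos, (t i / 2) * r i ≤ ∑ i ∈ pos, (1/2) * r i := by
      apply Finset.sum_le_sum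
      intro i hi
      have := (Finset.mem_filter.mp hi).2
      nlinarith [(ht i).2]
    have h2 : ∑ i ∈ neg, (t i / 2) * r i ≤ 0 := by
      apply Finset.sum_nonpos
      intro i hi
      have := hnegterm i hi
      nlinarith [(ht i).1]
    have h3 : ∑ i ∈ pos, (1/2 : ℝ) * r i = P/2 := by
      rw [← Finset.mul_sum, ← hPdef]; ring
    linarith
  have hb2 : -(P/2) ≤ b := by
    have h1 : (0:ℝ) ≤ ∑ i ∈ pos, (t i / 2) * r i := by
      apply Finset.sum_nonneg
      intro i hi
      have := (Finset.mem_filter.mp hi).2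
      nlinarith [(ht i).1]
    have h2 : ∑ i ∈ neg, (1/2 : ℝ) * r i ≤ ∑ i ∈ neg, (t i / 2) * r i := by
      apply Finset.sum_le_sum
      intro i hi
      have := hnegterm i hi
      nlinarith [(ht i).2]
    have h3 : ∑ i ∈ neg, (1/2 : ℝ) * r i = -(P/2) := by
      rw [← Finset.mul_sum, hPneg]; ring
    linarith
  set γ := ∑ i ∈ A, c i * r i with hγdef
  set m := γ - b with hmdef
  -- the two branches
  have posb : ∀ i0 ∈ B, 0 < r i0 → -(P/2) ≤ m →
      ∃ i1 ∈ B, ∃ n0 : ℕ, m - P/2 ≤ (n0:ℝ) * r i1 ∧ (n0:ℝ) * r i1 ≤ m + P/2 := by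
    intro i0 hi0 hri0 hm
    have hi0pos : i0 ∈ pos := Finset.mem_filter.mpr ⟨hBA hi0, hri0⟩
    have hrP : r i0 ≤ P :=
      Finset.single_le_sum (fun i hi => (Finset.mem_filter.mp hi).2.le) hi0pos
    obtain ⟨n0, h1, h2⟩ := ap_hits (r i0) P m hri0 hrP hm
    exact ⟨i0, hi0, n0, h1, h2⟩
  have negb : ∀ i0 ∈ B, r i0 < 0 → m ≤ P/2 →
      ∃ i1 ∈ B, ∃ n0 : ℕ, m - P/2 ≤ (n0:ℝ) * r i1 ∧ (n0:ℝ) * r i1 ≤ m + P/2 := by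
    intro i0 hi0 hri0 hm
    have hi0neg : i0 ∈ neg := Finset.mem_filter.mpr ⟨hBA hi0, not_lt.mpr hri0.le⟩
    have hrP : -(r i0) ≤ P := by
      have := Finset.sum_erase_add neg r hi0neg
      have herase : ∑ i ∈ neg.erase i0, r i ≤ 0 :=
        Finset.sum_nonpos (fun i hi => (hnegterm i (Finset.mem_of_mem_erase hi)).le)
      linarith [hPneg]
    obtain ⟨n0, h1, h2⟩ := ap_hits (-(r i0)) P (-m) (by linarith) hrP (by linarith)
    refine ⟨i0, hi0, n0, ?_, ?_⟩
    · have : (n0:ℝ) * -(r i0) = -((n0:ℝ) * r i0) := by ring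
      linarith [this ▸ h2]
    · have : (n0:ℝ) * -(r i0) = -((n0:ℝ) * r i0) := by ring
      linarith [this ▸ h1]
  have KEY : ∃ i1 ∈ B, ∃ n0 : ℕ, m - P/2 ≤ (n0:ℝ) * r i1 ∧ (n0:ℝ) * r i1 ≤ m + P/2 := by
    by_cases hpos : ∃ i ∈ B, 0 < r i
    · obtain ⟨ip, hipB, hip⟩ := hpos
      by_cases hm : -(P/2) ≤ m
      · exact posb ip hipB hip hm
      · push_neg at hm
        have hexneg : ∃ i ∈ B, r i < 0 := by
          by_contra hno
          push_neg at hno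
          have hγ0 : 0 ≤ γ := by
            apply Finset.sum_nonneg
            intro i hi
            by_cases hiB : i ∈ B
            · exact mul_nonneg (hc i)
                (lt_of_le_of_ne (hno i hiB) (Ne.symm (hr i hi))).le
            · rw [hc0 i hi hiB]; ring_nf; simp
          have : -(P/2) ≤ m := by rw [hmdef]; linarith
          exact absurd this (not_le.mpr hm)
        obtain ⟨im, himB, him⟩ := hexneg
        exact negb im himB him (by linarith)
    · push_neg at hpos
      obtain ⟨i0, hi0⟩ := hB
      have hri0 : r i0 < 0 := lt_of_le_of_ne (hpos i0 hi0) (hr i0 (hBA hi0))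
      have hγ0 : γ ≤ 0 := by
        apply Finset.sum_nonpos
        intro i hi
        by_cases hiB : i ∈ B
        · exact mul_nonpos_of_nonneg_of_nonpos (hc i)
            (lt_of_le_of_ne (hpos i hiB) (hr i hi)).le
        · rw [hc0 i hi hiB]; ring_nf; simp
      exact negb i0 hi0 hri0 (by rw [hmdef]; linarith)
  obtain ⟨i1, hi1B, n0, hn1, hn2⟩ := KEY
  set n : ι → ℕ := fun i => if i = i1 then n0 else 0 with hndef
  have hnsum : ∑ i ∈ A, ((n i : ℝ)) * r i = (n0:ℝ) * r i1 := by
    rw [Finset.sum_eq_single_of_mem i1 (hBA hi1B)]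
    · rw [hndef]; simp
    · intro i _ hne
      rw [hndef]; simp [hne]
  obtain ⟨s, hs, hssum⟩ := represent A r P hP rfl hPneg (m - (n0:ℝ) * r i1)
    (by linarith) (by linarith)
  refine ⟨n, s, ?_, hs, ?_⟩
  · intro i hi
    rw [hndef]
    simp only []
    split
    · next h => exact absurd (h ▸ hi1B) hi
    · rfl
  · have expand : ∀ i ∈ A, ((c i - (n i : ℝ)) - t i / 2 - s i / 2) * r i
        = c i * r i - (n i : ℝ) * r i - (t i / 2) * r i - (s i / 2) * r i := by
      intro i _; ring
    rw [Finset.sum_congr rfl expand, Finset.sum_sub_distrib, Finset.sum_sub_distrib,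
      Finset.sum_sub_distrib, hnsum, ← hγdef, ← hbdef, hssum]
    rw [hmdef]; ring

lemma fiber_sum_zero {k N : ℕ} (β : Fin N → (Fin k → ℝ)) (hβ0 : ∀ i, β i ≠ 0)
    (hqs : ∀ L : Submodule ℝ (Fin k → ℝ), Module.finrank ℝ L = 1 →
      ∑ i ∈ Finset.univ.filter (fun i => β i ∈ L), β i = 0)
    (i0 : Fin N) :
    ∑ j ∈ Finset.univ.filter
      (fun j => Submodule.span ℝ {β j} = Submodule.span ℝ {β i0}), β j = 0 := by
  have hfin : Module.finrank ℝ (Submodule.span ℝ {β i0}) = 1 :=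
    finrank_span_singleton (hβ0 i0)
  have hset : Finset.univ.filter
      (fun j => Submodule.span ℝ {β j} = Submodule.span ℝ {β i0})
      = Finset.univ.filter (fun j => β j ∈ Submodule.span ℝ {β i0}) := by
    ext j
    simp only [Finset.mem_filter, Finset.mem_univ, true_and]
    constructor
    · intro h; rw [← h]; exact Submodule.mem_span_singleton_self _
    · intro h
      apply Submodule.eq_of_le_of_finrank_eq
      · rwa [Submodule.span_le, Set.singleton_subset_iff]
      · rw [hfin]; exact finrank_span_singleton (hβ0 j)
  rw [hset]
  exact hqs _ hfin

lemma total_sum_zero {k N : ℕ} (β : Fin N → (Fin k → ℝ)) (hβ0 : ∀ i, β i ≠ 0)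
    (hqs : ∀ L : Submodule ℝ (Fin k → ℝ), Module.finrank ℝ L = 1 →
      ∑ i ∈ Finset.univ.filter (fun i => β i ∈ L), β i = 0) :
    ∑ i, β i = 0 := by
  set f : Fin N → Submodule ℝ (Fin k → ℝ) := fun i => Submodule.span ℝ {β i} with hf
  have h := Finset.sum_fiberwise_of_maps_to
    (s := (Finset.univ : Finset (Fin N))) (g := f) (t := Finset.univ.image f)
    (fun x _ => Finset.mem_image_of_mem f (Finset.mem_univ x)) β
  rw [← h]
  apply Finset.sum_eq_zero
  intro L hL
  obtain ⟨i0, _, rfl⟩ := Finset.mem_image.mp hL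
  exact fiber_sum_zero β hβ0 hqs i0

lemma fiber_exists {k N : ℕ} (β : Fin N → (Fin k → ℝ)) (hβ0 : ∀ i, β i ≠ 0)
    (I : Finset (Fin N))
    (c : Fin N → ℝ) (hc : ∀ i, 0 ≤ c i) (hc0 : ∀ i, i ∉ I → c i = 0)
    (t : Fin N → ℝ) (ht : ∀ i, t i ∈ Set.Icc (0:ℝ) 1)
    (hfib : ∀ i0 : Fin N, ∑ j ∈ Finset.univ.filter
        (fun j => Submodule.span ℝ {β j} = Submodule.span ℝ {β i0}), β j = 0)
    (L : Submodule ℝ (Fin k → ℝ)) :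
    ∃ (n : Fin N → ℕ) (s : Fin N → ℝ), (∀ i, i ∉ I → n i = 0) ∧
      (∀ i, s i ∈ Set.Icc (0:ℝ) 1) ∧
      ∑ j ∈ Finset.univ.filter (fun j => Submodule.span ℝ {β j} = L),
        ((c j - (n j : ℝ)) - t j / 2 - s j / 2) • β j = 0 := by
  by_cases hL : ∃ i0, Submodule.span ℝ {β i0} = L
  · obtain ⟨i0, rfl⟩ := hL
    have hrex : ∀ j, ∃ a : ℝ,
        (Submodule.span ℝ {β j} = Submodule.span ℝ {β i0} → a • β i0 = β j) := by
      intro j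
      by_cases hj : Submodule.span ℝ {β j} = Submodule.span ℝ {β i0}
      · have hmem : β j ∈ Submodule.span ℝ {β i0} :=
          hj ▸ Submodule.mem_span_singleton_self (β j)
        obtain ⟨a, ha⟩ := Submodule.mem_span_singleton.mp hmem
        exact ⟨a, fun _ => ha⟩
      · exact ⟨0, fun h => absurd h hj⟩
    choose r hr using hrex
    set A := Finset.univ.filter
      (fun j => Submodule.span ℝ {β j} = Submodule.span ℝ {β i0}) with hA
    have hmemA : ∀ j ∈ A, Submodule.span ℝ {β j} = Submodule.span ℝ {β i0} :=
      fun j hj => (Finset.mem_filter.mp hj).2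
    have hrA : ∀ j ∈ A, r j • β i0 = β j := fun j hj => hr j (hmemA j hj)
    have hrne : ∀ j ∈ A, r j ≠ 0 := fun j hj h0 =>
      hβ0 j (by rw [← hrA j hj, h0, zero_smul])
    have hrsum : ∑ j ∈ A, r j = 0 := by
      have h1 : (∑ j ∈ A, r j) • β i0 = 0 := by
        rw [Finset.sum_smul, Finset.sum_congr rfl hrA]
        exact hfib i0
      rcases smul_eq_zero.mp h1 with h | h
      · exact h
      · exact absurd h (hβ0 i0)
    obtain ⟨n, s, hn, hs, heq⟩ := line_lemma A (A ∩ I) Finset.inter_subset_left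
      r hrne hrsum c hc
      (fun i hiA hiB => hc0 i (fun hiI => hiB (Finset.mem_inter.mpr ⟨hiA, hiI⟩)))
      t ht
    refine ⟨n, s, fun i hi => hn i (fun hmem => hi (Finset.mem_inter.mp hmem).2), hs, ?_⟩
    have : ∀ j ∈ A, ((c j - (n j : ℝ)) - t j / 2 - s j / 2) • β j
        = (((c j - (n j : ℝ)) - t j / 2 - s j / 2) * r j) • β i0 := by
      intro j hj
      rw [← hrA j hj, smul_smul]
    rw [Finset.sum_congr rfl this, ← Finset.sum_smul, heq, zero_smul]
  · have hempty : Finset.univ.filter (fun j => Submodule.span ℝ {β j} = L) = ∅ := by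
      apply Finset.filter_false_of_mem
      intro j _
      exact fun h => hL ⟨j, h⟩
    refine ⟨fun _ => 0, fun _ => 0, fun _ _ => rfl, fun i => ?_, by rw [hempty]; simp⟩
    simp [Set.mem_Icc]

lemma mu_eval {k N : ℕ} (μ : (Fin N → ℝ) →ₗ[ℝ] (Fin k → ℝ))
    (β : Fin N → (Fin k → ℝ)) (hβ : ∀ i, β i = μ (Pi.single i 1))
    (x : Fin N → ℝ) : μ x = ∑ i, x i • β i := by
  have hx : x = ∑ i, x i • (Pi.single i 1 : Fin N → ℝ) := by
    conv_lhs => rw [pi_eq_sum_univ x]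
    refine Finset.sum_congr rfl fun i _ => ?_
    congr 1
    funext j
    rw [Pi.single_apply]
    by_cases h : i = j <;> simp [h, eq_comm]
  conv_lhs => rw [hx]
  rw [map_sum]
  exact Finset.sum_congr rfl fun i _ => by rw [map_smul, ← hβ i]

/-- **Proposition.** Assume quasi-symmetry and `μ(ℤ^N) = ℤ^k`.  For `δ ∈ ℝ^k`,
`ṽ ∈ ℤ^N` and `I ⊆ {1,…,N}`, there exists `w ∈ ℤ^N` with `μ(w) ∈ δ + ∇`,
`w_i < ṽ_i` for `i ∈ I` and `w_i = ṽ_i` for `i ∉ I`, if and only if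
`δ ∈ μ(ṽ) − β_I − C_I + ∇`. -/
theorem window_membership_iff_shift_in_AI
    {N k : ℕ} (hk : 1 ≤ k) (hNk : k ≤ N)
    (μ : (Fin N → ℝ) →ₗ[ℝ] (Fin k → ℝ))
    (hsurj : Function.Surjective μ)
    (hlat : ∀ w : Fin N → ℤ, ∃ u : Fin k → ℤ,
      μ (fun i => (w i : ℝ)) = fun j => (u j : ℝ))
    (hlat' : ∀ u : Fin k → ℤ, ∃ w : Fin N → ℤ,
      μ (fun i => (w i : ℝ)) = fun j => (u j : ℝ))
    (β : Fin N → (Fin k → ℝ)) (hβ : ∀ i, β i = μ (Pi.single i 1))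
    (hβ0 : ∀ i, β i ≠ 0)
    (hspan : Submodule.span ℝ (Set.range β) = ⊤)
    -- quasi-symmetry
    (hqs : ∀ L : Submodule ℝ (Fin k → ℝ), Module.finrank ℝ L = 1 →
      ∑ i ∈ Finset.univ.filter (fun i => β i ∈ L), β i = 0)
    (δ : Fin k → ℝ) (v : Fin N → ℤ) (I : Finset (Fin N)) :
    (∃ w : Fin N → ℤ,
        μ (fun i => (w i : ℝ)) - δ ∈ (2⁻¹ : ℝ) • ∑ i : Fin N, segment ℝ 0 (β i) ∧
        (∀ i ∈ I, w i < v i) ∧ (∀ i ∉ I, w i = v i)) ↔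
      (∃ c : Fin N → ℝ, (∀ i, 0 ≤ c i) ∧ (∀ i, i ∉ I → c i = 0) ∧
        ∃ nn ∈ (2⁻¹ : ℝ) • ∑ i : Fin N, segment ℝ 0 (β i),
          δ = μ (fun i => (v i : ℝ)) - (∑ i ∈ I, β i) - (∑ i, c i • β i) + nn) := by
  have hfib := fiber_sum_zero β hβ0 hqs
  have htot : ∑ i, β i = 0 := total_sum_zero β hβ0 hqs
  have hμ : ∀ x : Fin N → ℝ, μ x = ∑ i, x i • β i := mu_eval μ β hβ
  have hSI : ∑ i, (if i ∈ I then (1:ℝ) else 0) • β i = ∑ i ∈ I, β i := by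
    have h : ∀ i ∈ Finset.univ, (if i ∈ I then (1:ℝ) else 0) • β i
        = if i ∈ I then β i else 0 := by
      intro i _; split <;> simp
    rw [Finset.sum_congr rfl h, Finset.sum_ite_mem, Finset.univ_inter]
  have expand_sub : ∀ g h : Fin N → ℝ,
      ∑ i, (g i - h i) • β i = ∑ i, g i • β i - ∑ i, h i • β i := by
    intro g h; simp only [sub_smul, Finset.sum_sub_distrib]
  have expand_add : ∀ g h : Fin N → ℝ,
      ∑ i, (g i + h i) • β i = ∑ i, g i • β i + ∑ i, h i • β i := by
    intro g h; simp only [add_smul, Finset.sum_add_distrib]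
  constructor
  · rintro ⟨w, hw, hwI, hwO⟩
    rw [mem_nabla_iff] at hw
    obtain ⟨t, ht, hteq⟩ := hw
    set c : Fin N → ℝ := fun i => if i ∈ I then (v i : ℝ) - (w i : ℝ) - 1 else 0 with hcdef
    have hc : ∀ i, 0 ≤ c i := by
      intro i
      rw [hcdef]; dsimp only
      split
      · next h =>
        have h1 : w i + 1 ≤ v i := hwI i h
        have h2 : ((w i : ℝ)) + 1 ≤ (v i : ℝ) := by exact_mod_cast h1
        linarith
      · exact le_refl 0
    refine ⟨c, hc, fun i hi => by rw [hcdef]; simp [hi],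
      ∑ i, ((1 - t i)/2) • β i, ?_, ?_⟩
    · rw [mem_nabla_iff]
      refine ⟨fun i => 1 - t i, fun i => Set.mem_Icc.mpr ?_, rfl⟩
      exact ⟨show (0:ℝ) ≤ 1 - t i by linarith [(ht i).2],
        show (1:ℝ) - t i ≤ 1 by linarith [(ht i).1]⟩
    · have hδ2 : δ = (∑ i, ((w i : ℝ)) • β i) - ∑ i, (t i / 2) • β i := by
        rw [hμ] at hteq
        have h := sub_eq_iff_eq_add.mp hteq
        rw [h]; abel
      have key2 : ∑ i, ((w i : ℝ) - t i / 2) • β i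
          = ∑ i, ((v i : ℝ) - (if i ∈ I then (1:ℝ) else 0) - c i + (1 - t i)/2) • β i := by
        apply sub_eq_zero.mp
        rw [← Finset.sum_sub_distrib]
        have h : ∀ i ∈ Finset.univ,
            ((w i : ℝ) - t i / 2) • β i
              - ((v i : ℝ) - (if i ∈ I then (1:ℝ) else 0) - c i + (1 - t i)/2) • β i
            = (-(2⁻¹ : ℝ)) • β i := by
          intro i _
          rw [← sub_smul]
          congr 1
          rw [hcdef]; dsimp only
          by_cases hi : i ∈ I
          · rw [if_pos hi, if_pos hi]; ring
          · rw [if_neg hi, if_neg hi]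
            have := hwO i hi
            have h2 : ((w i : ℝ)) = (v i : ℝ) := by exact_mod_cast this
            rw [h2]; ring
        rw [Finset.sum_congr rfl h, ← Finset.smul_sum, htot, smul_zero]
      calc δ = ∑ i, ((w i : ℝ) - t i / 2) • β i := by rw [expand_sub]; exact hδ2
        _ = ∑ i, ((v i : ℝ) - (if i ∈ I then (1:ℝ) else 0) - c i + (1 - t i)/2) • β i := key2
        _ = μ (fun i => (v i : ℝ)) - (∑ i ∈ I, β i) - (∑ i, c i • β i)
              + ∑ i, ((1 - t i)/2) • β i := by
          rw [hμ]
          simp only [sub_smul, add_smul, Finset.sum_sub_distrib, Finset.sum_add_distrib]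
          rw [hSI]
  · rintro ⟨c, hc, hc0, nn, hnn, hδ⟩
    rw [mem_nabla_iff] at hnn
    obtain ⟨t, ht, hnneq⟩ := hnn
    choose gn gs hgn hgs hgeq using fiber_exists β hβ0 I c hc hc0 t ht hfib
    set n : Fin N → ℕ := fun i => gn (Submodule.span ℝ {β i}) i with hndef
    set s : Fin N → ℝ := fun i => gs (Submodule.span ℝ {β i}) i with hsdef
    have hnI : ∀ i, i ∉ I → n i = 0 := fun i hi => hgn _ i hi
    have hsIcc : ∀ i, s i ∈ Set.Icc (0:ℝ) 1 := fun i => hgs _ i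
    have hglob : ∑ j, ((c j - (n j : ℝ)) - t j / 2 - s j / 2) • β j = 0 := by
      set f : Fin N → Submodule ℝ (Fin k → ℝ) := fun i => Submodule.span ℝ {β i} with hf
      rw [← Finset.sum_fiberwise_of_maps_to (s := (Finset.univ : Finset (Fin N)))
        (g := f) (t := Finset.univ.image f)
        (fun x _ => Finset.mem_image_of_mem f (Finset.mem_univ x))
        (fun j => ((c j - (n j : ℝ)) - t j / 2 - s j / 2) • β j)]
      apply Finset.sum_eq_zero
      intro L hL
      have h : ∀ j ∈ Finset.univ.filter (fun j => f j = L),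
          ((c j - (n j : ℝ)) - t j / 2 - s j / 2) • β j
            = ((c j - (gn L j : ℝ)) - t j / 2 - gs L j / 2) • β j := by
        intro j hj
        have hjL : f j = L := (Finset.mem_filter.mp hj).2
        rw [hndef, hsdef]; dsimp only
        rw [show Submodule.span ℝ {β j} = L from hjL]
      rw [Finset.sum_congr rfl h]
      exact hgeq L
    set w : Fin N → ℤ := fun i => if i ∈ I then v i - (n i + 1) else v i with hwdef
    refine ⟨w, ?_, ?_, ?_⟩
    · rw [mem_nabla_iff]
      refine ⟨s, hsIcc, ?_⟩
      rw [hδ, hnneq]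
      simp only [hμ]
      apply sub_eq_zero.mp
      have step1 : (∑ i, ((w i : ℝ)) • β i
          - ((∑ i, ((v i : ℝ)) • β i) - (∑ i ∈ I, β i) - (∑ i, c i • β i)
            + ∑ i, (t i / 2) • β i))
          - ∑ i, (s i / 2) • β i
          = ∑ i, (((w i : ℝ)) - (v i : ℝ) + (if i ∈ I then (1:ℝ) else 0) + c i
              - t i / 2 - s i / 2) • β i := by
        simp only [sub_smul, add_smul, Finset.sum_sub_distrib, Finset.sum_add_distrib]
        rw [hSI]
        abel
      rw [step1]
      have h2 : ∀ i ∈ Finset.univ,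
          (((w i : ℝ)) - (v i : ℝ) + (if i ∈ I then (1:ℝ) else 0) + c i
              - t i / 2 - s i / 2) • β i
            = ((c i - (n i : ℝ)) - t i / 2 - s i / 2) • β i := by
        intro i _
        congr 1
        rw [hwdef]; dsimp only
        by_cases hi : i ∈ I
        · rw [if_pos hi, if_pos hi]; push_cast; ring
        · rw [if_neg hi, if_neg hi, hnI i hi]; push_cast; ring
      rw [Finset.sum_congr rfl h2]
      exact hglob
    · intro i hi
      rw [hwdef]; dsimp only
      rw [if_pos hi]
      omega
    · intro i hi
      rw [hwdef]; dsimp only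
      rw [if_neg hi]
end

section
/- Assume quasi-symmetry. Let ξ be a nonzero linear functional on ℝ^k, F = F_ξ = {x∈∇ : ξ(x) = max_{y∈∇} ξ(y)} the face of ∇ exposed by ξ, C_F = {t(x−y) : t ≥ 0, x ∈ ∇, y ∈ F} the tangent cone of ∇ along F, and I_F = {i : β_i ∉ C_F}. Then I_F = {i : ξ(β_i) > 0}, and ∑_{i∈I_F} [0,−β_i] + ∑_{i∉I_F} ℝ_{≥0}β_i = C_F, where ℝ_{≥0}β_i = {tβ_i : t ≥ 0} and the sums are Minkowski sums. -/
open Pointwise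
open scoped Classical

noncomputable section

/-- The zonotope `∇ = (1/2)∑_i [0, β_i]`. -/
def nabla {N k : ℕ} (β : Fin N → (Fin k → ℝ)) : Set (Fin k → ℝ) :=
  (2⁻¹ : ℝ) • ∑ i : Fin N, segment ℝ 0 (β i)

/-- The face `F_ξ` of `∇` exposed by the linear functional `ξ`. -/
def exposedFace {N k : ℕ} (β : Fin N → (Fin k → ℝ))
    (ξ : (Fin k → ℝ) →ₗ[ℝ] ℝ) : Set (Fin k → ℝ) :=
  {x ∈ nabla β | ∀ y ∈ nabla β, ξ y ≤ ξ x}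

/-- The tangent cone `C_F = {t(x − y) : t ≥ 0, x ∈ ∇, y ∈ F}` of `∇` along the
face `F = F_ξ`. -/
def tangentConeFace {N k : ℕ} (β : Fin N → (Fin k → ℝ))
    (ξ : (Fin k → ℝ) →ₗ[ℝ] ℝ) : Set (Fin k → ℝ) :=
  {y | ∃ t : ℝ, 0 ≤ t ∧ ∃ x ∈ nabla β, ∃ z ∈ exposedFace β ξ, y = t • (x - z)}

/-! ### Auxiliary lemmas -/

lemma mem_segment_zero {k : ℕ} {v x : Fin k → ℝ} :
    x ∈ segment ℝ 0 v ↔ ∃ t : ℝ, 0 ≤ t ∧ t ≤ 1 ∧ x = t • v := by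
  rw [segment_eq_image]
  constructor
  · rintro ⟨t, ⟨h0, h1⟩, rfl⟩
    exact ⟨t, h0, h1, by simp⟩
  · rintro ⟨t, h0, h1, rfl⟩
    exact ⟨t, ⟨h0, h1⟩, by simp⟩

lemma mem_nabla {N k : ℕ} {β : Fin N → (Fin k → ℝ)} {x : Fin k → ℝ} :
    x ∈ nabla β ↔ ∃ t : Fin N → ℝ, (∀ i, 0 ≤ t i ∧ t i ≤ 1) ∧
      x = (2⁻¹ : ℝ) • ∑ i : Fin N, t i • β i := by
  unfold nabla
  rw [Set.mem_smul_set]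
  constructor
  · rintro ⟨y, hy, rfl⟩
    rw [Set.mem_fintype_sum] at hy
    obtain ⟨g, hg, rfl⟩ := hy
    have : ∀ i, ∃ t : ℝ, 0 ≤ t ∧ t ≤ 1 ∧ g i = t • β i := fun i => mem_segment_zero.1 (hg i)
    choose t h0 h1 hgt using this
    exact ⟨t, fun i => ⟨h0 i, h1 i⟩, by rw [Finset.sum_congr rfl fun i _ => hgt i]⟩
  · rintro ⟨t, ht, rfl⟩
    refine ⟨∑ i, t i • β i, ?_, rfl⟩
    rw [Set.mem_fintype_sum]
    exact ⟨fun i => t i • β i, fun i => mem_segment_zero.2 ⟨t i, (ht i).1, (ht i).2, rfl⟩, rfl⟩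

section FaceLemmas

variable {N k : ℕ} {β : Fin N → (Fin k → ℝ)} {ξ : (Fin k → ℝ) →ₗ[ℝ] ℝ}

lemma xi_smul_sum (t : Fin N → ℝ) :
    ξ ((2⁻¹ : ℝ) • ∑ i : Fin N, t i • β i) = 2⁻¹ * ∑ i : Fin N, t i * ξ (β i) := by
  rw [map_smul, map_sum]
  simp [smul_eq_mul]

lemma xi_le_max {x : Fin k → ℝ} (hx : x ∈ nabla β) :
    ξ x ≤ 2⁻¹ * ∑ i ∈ Finset.univ.filter (fun i => 0 < ξ (β i)), ξ (β i) := by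
  obtain ⟨t, ht, rfl⟩ := mem_nabla.1 hx
  rw [xi_smul_sum]
  have h2 : (0:ℝ) < 2⁻¹ := by norm_num
  apply mul_le_mul_of_nonneg_left _ h2.le
  rw [← Finset.sum_filter_add_sum_filter_not Finset.univ (fun i => 0 < ξ (β i))
    (fun i => t i * ξ (β i))]
  have hA : ∑ i ∈ Finset.univ.filter (fun i => 0 < ξ (β i)), t i * ξ (β i)
      ≤ ∑ i ∈ Finset.univ.filter (fun i => 0 < ξ (β i)), ξ (β i) := by
    apply Finset.sum_le_sum
    intro i hi
    rw [Finset.mem_filter] at hi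
    nlinarith [(ht i).1, (ht i).2, hi.2]
  have hB : ∑ i ∈ Finset.univ.filter (fun i => ¬ 0 < ξ (β i)), t i * ξ (β i) ≤ 0 := by
    apply Finset.sum_nonpos
    intro i hi
    rw [Finset.mem_filter] at hi
    exact mul_nonpos_of_nonneg_of_nonpos (ht i).1 (le_of_not_gt hi.2)
  linarith

lemma face_mem (u : Fin N → ℝ) (hu : ∀ i, 0 ≤ u i ∧ u i ≤ 1)
    (hup : ∀ i, 0 < ξ (β i) → u i = 1) (hun : ∀ i, ξ (β i) < 0 → u i = 0) :
    ((2⁻¹ : ℝ) • ∑ i : Fin N, u i • β i) ∈ exposedFace β ξ := by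
  have hmem : ((2⁻¹ : ℝ) • ∑ i : Fin N, u i • β i) ∈ nabla β := mem_nabla.2 ⟨u, hu, rfl⟩
  refine ⟨hmem, fun y hy => ?_⟩
  refine le_trans (xi_le_max hy) ?_
  rw [xi_smul_sum]
  apply le_of_eq
  congr 1
  rw [← Finset.sum_filter_add_sum_filter_not Finset.univ (fun i => 0 < ξ (β i))
    (fun i => u i * ξ (β i))]
  have h1 : ∑ i ∈ Finset.univ.filter (fun i => 0 < ξ (β i)), u i * ξ (β i)
      = ∑ i ∈ Finset.univ.filter (fun i => 0 < ξ (β i)), ξ (β i) := by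
    apply Finset.sum_congr rfl
    intro i hi
    rw [Finset.mem_filter] at hi
    rw [hup i hi.2, one_mul]
  have h2 : ∑ i ∈ Finset.univ.filter (fun i => ¬ 0 < ξ (β i)), u i * ξ (β i) = 0 := by
    apply Finset.sum_eq_zero
    intro i hi
    rw [Finset.mem_filter] at hi
    rcases lt_or_eq_of_le (le_of_not_gt hi.2) with h | h
    · rw [hun i h, zero_mul]
    · rw [h, mul_zero]
  rw [h1, h2, add_zero]

lemma face_coeff {z : Fin k → ℝ} (hz : z ∈ exposedFace β ξ) (u : Fin N → ℝ)
    (hu : ∀ i, 0 ≤ u i ∧ u i ≤ 1) (hzu : z = (2⁻¹ : ℝ) • ∑ i : Fin N, u i • β i) :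
    (∀ i, 0 < ξ (β i) → u i = 1) ∧ (∀ i, ξ (β i) < 0 → u i = 0) := by
  have hmax : 2⁻¹ * ∑ i ∈ Finset.univ.filter (fun i => 0 < ξ (β i)), ξ (β i) ≤ ξ z := by
    have hp : ((2⁻¹ : ℝ) • ∑ i : Fin N, (fun i => if 0 < ξ (β i) then (1:ℝ) else 0) i • β i)
        ∈ nabla β := mem_nabla.2 ⟨_, fun i => by by_cases h : 0 < ξ (β i) <;> simp [h], rfl⟩
    have := hz.2 _ hp
    rw [xi_smul_sum] at this
    refine le_trans (le_of_eq ?_) this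
    congr 1
    rw [Finset.sum_filter]
    apply Finset.sum_congr rfl
    intro i _
    split <;> simp
  have hle : ξ z ≤ 2⁻¹ * ∑ i ∈ Finset.univ.filter (fun i => 0 < ξ (β i)), ξ (β i) :=
    xi_le_max hz.1
  have heq : ξ z = 2⁻¹ * ∑ i ∈ Finset.univ.filter (fun i => 0 < ξ (β i)), ξ (β i) :=
    le_antisymm hle hmax
  rw [hzu, xi_smul_sum] at heq
  have hsum : ∑ i : Fin N, ((if 0 < ξ (β i) then (1:ℝ) else 0) - u i) * ξ (β i) = 0 := by
    have : ∑ i : Fin N, (if 0 < ξ (β i) then (1:ℝ) else 0) * ξ (β i)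
        = ∑ i ∈ Finset.univ.filter (fun i => 0 < ξ (β i)), ξ (β i) := by
      rw [Finset.sum_filter]
      apply Finset.sum_congr rfl
      intro i _
      split <;> simp
    simp only [sub_mul, Finset.sum_sub_distrib, this]
    have h2 : (2⁻¹ : ℝ) ≠ 0 := by norm_num
    field_simp at heq
    linarith
  have hnn : ∀ i ∈ Finset.univ, (0:ℝ) ≤ ((if 0 < ξ (β i) then (1:ℝ) else 0) - u i) * ξ (β i) := by
    intro i _
    rcases lt_trichotomy (ξ (β i)) 0 with h | h | h
    · simp only [if_neg (not_lt.2 h.le)]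
      nlinarith [(hu i).1]
    · rw [h, mul_zero]
    · simp only [if_pos h]
      exact mul_nonneg (by linarith [(hu i).2]) h.le
  have hzero := (Finset.sum_eq_zero_iff_of_nonneg hnn).1 hsum
  constructor
  · intro i hi
    have := hzero i (Finset.mem_univ i)
    rw [if_pos hi] at this
    rcases mul_eq_zero.1 this with h | h
    · linarith
    · exact absurd h (ne_of_gt hi)
  · intro i hi
    have := hzero i (Finset.mem_univ i)
    rw [if_neg (not_lt.2 hi.le)] at this
    rcases mul_eq_zero.1 this with h | h
    · linarith
    · exact absurd h (ne_of_lt hi)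

lemma comb_eq (t : ℝ) (s u : Fin N → ℝ) :
    t • (((2⁻¹ : ℝ) • ∑ i : Fin N, s i • β i) - ((2⁻¹ : ℝ) • ∑ i : Fin N, u i • β i))
      = ∑ i : Fin N, (t * 2⁻¹ * (s i - u i)) • β i := by
  rw [← smul_sub, ← Finset.sum_sub_distrib]
  rw [smul_smul, Finset.smul_sum]
  apply Finset.sum_congr rfl
  intro i _
  rw [← sub_smul, smul_smul]

lemma cone_char :
    tangentConeFace β ξ = {y | ∃ c : Fin N → ℝ,
      (∀ i, 0 < ξ (β i) → c i ≤ 0) ∧ (∀ i, ξ (β i) < 0 → 0 ≤ c i) ∧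
      y = ∑ i : Fin N, c i • β i} := by
  ext y
  constructor
  · rintro ⟨t, ht, x, hx, z, hz, rfl⟩
    obtain ⟨s, hs, rfl⟩ := mem_nabla.1 hx
    obtain ⟨u, hu, hzu⟩ := mem_nabla.1 hz.1
    obtain ⟨hup, hun⟩ := face_coeff hz u hu hzu
    refine ⟨fun i => t * 2⁻¹ * (s i - u i), ?_, ?_, ?_⟩
    · intro i hi
      have := hup i hi
      nlinarith [(hs i).2]
    · intro i hi
      have := hun i hi
      nlinarith [(hs i).1]
    · rw [hzu, comb_eq]
  · rintro ⟨c, hcp, hcn, rfl⟩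
    set T : ℝ := 2 * (1 + ∑ i : Fin N, |c i|) with hT
    have hsum_nn : (0:ℝ) ≤ ∑ i : Fin N, |c i| :=
      Finset.sum_nonneg fun i _ => abs_nonneg _
    have hTpos : 0 < T := by rw [hT]; linarith
    have hbound : ∀ i, |c i| * 2 ≤ T := by
      intro i
      have : |c i| ≤ ∑ j : Fin N, |c j| :=
        Finset.single_le_sum (fun j _ => abs_nonneg (c j)) (Finset.mem_univ i)
      rw [hT]; linarith
    set u : Fin N → ℝ := fun i => if 0 < ξ (β i) then 1 else if c i < 0 then 1 else 0 with hud
    set s : Fin N → ℝ := fun i => u i + 2 * c i / T with hsd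
    have hu01 : ∀ i, 0 ≤ u i ∧ u i ≤ 1 := by
      intro i; rw [hud]; dsimp only
      split
      · norm_num
      · split <;> norm_num
    have heps : ∀ i, |2 * c i / T| ≤ 1 := by
      intro i
      rw [abs_div, abs_of_pos hTpos, div_le_one hTpos, abs_mul]
      have := hbound i
      rw [abs_two]
      linarith
    have hs01 : ∀ i, 0 ≤ s i ∧ s i ≤ 1 := by
      intro i
      have he := abs_le.1 (heps i)
      rw [hsd]; dsimp only
      rw [hud]; dsimp only
      by_cases h1 : 0 < ξ (β i)
      · have hc := hcp i h1
        have : 2 * c i / T ≤ 0 := div_nonpos_of_nonpos_of_nonneg (by linarith) hTpos.le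
        rw [if_pos h1]
        constructor <;> linarith [he.1]
      · rw [if_neg h1]
        by_cases h2 : c i < 0
        · rw [if_pos h2]
          have : 2 * c i / T ≤ 0 := div_nonpos_of_nonpos_of_nonneg (by linarith) hTpos.le
          constructor <;> linarith [he.1]
        · rw [if_neg h2]
          push_neg at h2
          have : 0 ≤ 2 * c i / T := div_nonneg (by linarith) hTpos.le
          constructor <;> linarith [he.2]
    have hzF : ((2⁻¹ : ℝ) • ∑ i : Fin N, u i • β i) ∈ exposedFace β ξ := by
      apply face_mem u hu01
      · intro i hi; rw [hud]; simp [hi]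
      · intro i hi
        have h1 : ¬ 0 < ξ (β i) := not_lt.2 hi.le
        have h2 : ¬ c i < 0 := not_lt.2 (hcn i hi)
        rw [hud]; simp [h1, h2]
    refine ⟨T, hTpos.le, (2⁻¹ : ℝ) • ∑ i : Fin N, s i • β i, mem_nabla.2 ⟨s, hs01, rfl⟩,
      _, hzF, ?_⟩
    rw [comb_eq]
    apply Finset.sum_congr rfl
    intro i _
    congr 1
    rw [hsd]
    dsimp only
    field_simp
    ring

lemma exists_neg_dir (hβ0 : ∀ i, β i ≠ 0)
    (hqs : ∀ L : Submodule ℝ (Fin k → ℝ), Module.finrank ℝ L = 1 →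
      ∑ i ∈ Finset.univ.filter (fun i => β i ∈ L), β i = 0)
    (i : Fin N) : ∃ j : Fin N, ∃ γ : ℝ, γ < 0 ∧ β j = γ • β i := by
  set L := Submodule.span ℝ {β i} with hL
  have hr : Module.finrank ℝ L = 1 := finrank_span_singleton (hβ0 i)
  have hsum := hqs L hr
  set S := Finset.univ.filter (fun j => β j ∈ L) with hS
  have hmem : ∀ j ∈ S, ∃ γ : ℝ, β j = γ • β i := by
    intro j hj
    rw [hS, Finset.mem_filter] at hj
    obtain ⟨γ, hγ⟩ := Submodule.mem_span_singleton.1 hj.2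
    exact ⟨γ, hγ.symm⟩
  choose! γ hγ using hmem
  have hγ0 : ∀ j ∈ S, γ j ≠ 0 := by
    intro j hj h0
    apply hβ0 j
    rw [hγ j hj, h0, zero_smul]
  have hiS : i ∈ S := by
    rw [hS, Finset.mem_filter]
    exact ⟨Finset.mem_univ i, Submodule.mem_span_singleton_self _⟩
  by_contra hno
  push_neg at hno
  have hpos : ∀ j ∈ S, 0 < γ j := by
    intro j hj
    rcases lt_trichotomy (γ j) 0 with h | h | h
    · exact absurd (hγ j hj) (hno j (γ j) h)
    · exact absurd h (hγ0 j hj)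
    · exact h
  have hsum2 : (∑ j ∈ S, γ j) • β i = 0 := by
    rw [Finset.sum_smul, ← hsum]
    exact Finset.sum_congr rfl fun j hj => (hγ j hj).symm
  have : ∑ j ∈ S, γ j = 0 := by
    rcases smul_eq_zero.1 hsum2 with h | h
    · exact h
    · exact absurd h (hβ0 i)
  have : 0 < ∑ j ∈ S, γ j := Finset.sum_pos hpos ⟨i, hiS⟩
  linarith

lemma rhs_char :
    (∑ i : Fin N, (if 0 < ξ (β i) then segment ℝ 0 (-(β i))
        else {y | ∃ t : ℝ, 0 ≤ t ∧ y = t • β i}))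
    = {y | ∃ c : Fin N → ℝ, (∀ i, 0 < ξ (β i) → (-1 ≤ c i ∧ c i ≤ 0)) ∧
        (∀ i, ¬ 0 < ξ (β i) → 0 ≤ c i) ∧ y = ∑ i : Fin N, c i • β i} := by
  ext y
  rw [Set.mem_fintype_sum]
  constructor
  · rintro ⟨g, hg, rfl⟩
    have : ∀ i, ∃ c : ℝ, ((0 < ξ (β i) → (-1 ≤ c ∧ c ≤ 0)) ∧ (¬ 0 < ξ (β i) → 0 ≤ c)) ∧
        g i = c • β i := by
      intro i
      have := hg i
      by_cases h : 0 < ξ (β i)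
      · rw [if_pos h] at this
        obtain ⟨t, ht0, ht1, hgt⟩ := mem_segment_zero.1 this
        refine ⟨-t, ⟨fun _ => ⟨by linarith, by linarith⟩, fun h' => absurd h h'⟩, ?_⟩
        rw [hgt, smul_neg, neg_smul]
      · rw [if_neg h] at this
        obtain ⟨t, ht0, hgt⟩ := this
        exact ⟨t, ⟨fun h' => absurd h' h, fun _ => ht0⟩, hgt⟩
    choose c hc hgc using this
    exact ⟨c, fun i => (hc i).1, fun i => (hc i).2,
      Finset.sum_congr rfl fun i _ => hgc i⟩
  · rintro ⟨c, h1, h2, rfl⟩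
    refine ⟨fun i => c i • β i, fun i => ?_, rfl⟩
    by_cases h : 0 < ξ (β i)
    · rw [if_pos h]
      obtain ⟨ha, hb⟩ := h1 i h
      exact mem_segment_zero.2 ⟨-(c i), by linarith, by linarith,
        by rw [smul_neg, neg_smul, neg_neg]⟩
    · rw [if_neg h]
      exact ⟨c i, h2 i h, rfl⟩

lemma surgery (hβ0 : ∀ i, β i ≠ 0)
    (hqs : ∀ L : Submodule ℝ (Fin k → ℝ), Module.finrank ℝ L = 1 →
      ∑ i ∈ Finset.univ.filter (fun i => β i ∈ L), β i = 0) :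
    {y | ∃ c : Fin N → ℝ,
      (∀ i, 0 < ξ (β i) → c i ≤ 0) ∧ (∀ i, ξ (β i) < 0 → 0 ≤ c i) ∧
      y = ∑ i : Fin N, c i • β i}
    = {y | ∃ c : Fin N → ℝ, (∀ i, 0 < ξ (β i) → (-1 ≤ c i ∧ c i ≤ 0)) ∧
        (∀ i, ¬ 0 < ξ (β i) → 0 ≤ c i) ∧ y = ∑ i : Fin N, c i • β i} := by
  ext y
  constructor
  · rintro ⟨c, hcp, hcn, rfl⟩
    choose τ γ hγneg hγeq using exists_neg_dir hβ0 hqs (β := β)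
    set P : Fin N → Prop := fun i => 0 < ξ (β i) ∨ c i < 0 with hP
    set B : Finset (Fin N) := Finset.univ.filter P with hB
    have hcB : ∀ i ∈ B, c i ≤ 0 := by
      intro i hi
      rw [hB, Finset.mem_filter] at hi
      rcases hi.2 with h | h
      · exact hcp i h
      · exact h.le
    have hτ : ∀ i ∈ B, ¬ 0 < ξ (β (τ i)) := by
      intro i hi
      rw [hB, Finset.mem_filter] at hi
      have hxi : ξ (β (τ i)) = γ i * ξ (β i) := by
        rw [hγeq i, map_smul, smul_eq_mul]
      rcases lt_trichotomy (ξ (β i)) 0 with h' | h' | h'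
      · exfalso
        rcases hi.2 with h | h
        · exact absurd h (not_lt.2 h'.le).elim
        · exact absurd (hcn i h') (not_le.2 h)
      · rw [hxi, h', mul_zero]
        exact lt_irrefl 0
      · rw [hxi]
        exact not_lt.2 (mul_nonpos_of_nonpos_of_nonneg (hγneg i).le h'.le)
    set c' : Fin N → ℝ := fun m =>
      (if P m then 0 else c m) + ∑ i ∈ B.filter (fun i => τ i = m), c i / γ i with hc'
    have hterm_nn : ∀ i ∈ B, 0 ≤ c i / γ i := fun i hi =>
      div_nonneg_iff.2 (Or.inr ⟨hcB i hi, (hγneg i).le⟩)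
    refine ⟨c', ?_, ?_, ?_⟩
    · intro m hm
      have hempty : B.filter (fun i => τ i = m) = ∅ := by
        rw [Finset.filter_eq_empty_iff]
        intro i hi
        intro he
        exact hτ i hi (he ▸ hm)
      have : c' m = 0 := by
        rw [hc']
        dsimp only
        rw [if_pos (Or.inl hm), hempty, Finset.sum_empty, add_zero]
      rw [this]
      norm_num
    · intro m hm
      rw [hc']
      dsimp only
      apply add_nonneg
      · by_cases h : P m
        · rw [if_pos h]
        · rw [if_neg h]
          exact not_lt.1 fun hlt => h (Or.inr hlt)
      · exact Finset.sum_nonneg fun i hi => hterm_nn i (Finset.mem_of_mem_filter i hi)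
    · have expand : ∑ m : Fin N, c' m • β m
          = (∑ m : Fin N, (if P m then 0 else c m) • β m)
            + ∑ m : Fin N, (∑ i ∈ B.filter (fun i => τ i = m), c i / γ i) • β m := by
        rw [← Finset.sum_add_distrib]
        exact Finset.sum_congr rfl fun m _ => by rw [hc', add_smul]
      have first : ∑ m : Fin N, (if P m then 0 else c m) • β m
          = ∑ m ∈ Finset.univ.filter (fun m => ¬ P m), c m • β m := by
        rw [Finset.sum_filter]
        apply Finset.sum_congr rfl
        intro m _
        by_cases h : P m
        · rw [if_pos h, if_neg (not_not_intro h), zero_smul]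
        · rw [if_neg h, if_pos h]
      have second : ∑ m : Fin N, (∑ i ∈ B.filter (fun i => τ i = m), c i / γ i) • β m
          = ∑ i ∈ B, c i • β i := by
        have step1 : ∀ m : Fin N, (∑ i ∈ B.filter (fun i => τ i = m), c i / γ i) • β m
            = ∑ i ∈ B.filter (fun i => τ i = m), (c i / γ i) • β (τ i) := by
          intro m
          rw [Finset.sum_smul]
          apply Finset.sum_congr rfl
          intro i hi
          rw [Finset.mem_filter] at hi
          rw [hi.2]
        rw [Finset.sum_congr rfl fun m _ => step1 m]
        rw [Finset.sum_fiberwise B τ (fun i => (c i / γ i) • β (τ i))]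
        apply Finset.sum_congr rfl
        intro i hi
        rw [hγeq i, smul_smul, div_mul_cancel₀]
        exact ne_of_lt (hγneg i)
      rw [expand, first, second, hB]
      rw [add_comm, Finset.sum_filter_add_sum_filter_not]
  · rintro ⟨c, h1, h2, rfl⟩
    exact ⟨c, fun i hi => (h1 i hi).2, fun i hi => h2 i (not_lt.2 hi.le), rfl⟩

lemma notMem_cone_iff (i : Fin N) :
    β i ∉ tangentConeFace β ξ ↔ 0 < ξ (β i) := by
  rw [cone_char]
  constructor
  · intro h
    by_contra hne
    apply h
    refine ⟨fun j => if j = i then 1 else 0, ?_, ?_, ?_⟩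
    · intro j hj
      by_cases he : j = i
      · exact absurd (he ▸ hj) hne
      · simp [he]
    · intro j _
      by_cases he : j = i <;> simp [he]
    · have : ∀ j : Fin N, (if j = i then (1:ℝ) else 0) • β j = if j = i then β j else 0 := by
        intro j
        split <;> simp
      rw [Finset.sum_congr rfl fun j _ => this j, Finset.sum_ite_eq' Finset.univ i β,
        if_pos (Finset.mem_univ i)]
  · rintro hpos ⟨c, hcp, hcn, hsum⟩
    have : ξ (β i) ≤ 0 := by
      rw [hsum, map_sum]
      apply Finset.sum_nonpos
      intro j _
      rw [map_smul, smul_eq_mul]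
      rcases lt_trichotomy (ξ (β j)) 0 with h | h | h
      · exact mul_nonpos_of_nonneg_of_nonpos (hcn j h) h.le
      · rw [h, mul_zero]
      · exact mul_nonpos_of_nonpos_of_nonneg (hcp j h) h.le
    linarith

end FaceLemmas

/-- **Lemma.** Under quasi-symmetry, for a nonzero functional `ξ` with exposed
face `F = F_ξ`, tangent cone `C_F` and `I_F = {i : β_i ∉ C_F}`, one has
`I_F = {i : ξ(β_i) > 0}` and
`∑_{i ∈ I_F} [0, −β_i] + ∑_{i ∉ I_F} ℝ_{≥0}β_i = C_F`. -/
theorem tangent_cone_of_face_decomposition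
    {N k : ℕ} (hk : 1 ≤ k) (hNk : k ≤ N)
    (μ : (Fin N → ℝ) →ₗ[ℝ] (Fin k → ℝ))
    (hsurj : Function.Surjective μ)
    (β : Fin N → (Fin k → ℝ)) (hβ : ∀ i, β i = μ (Pi.single i 1))
    (hβ0 : ∀ i, β i ≠ 0)
    (hspan : Submodule.span ℝ (Set.range β) = ⊤)
    (hqs : ∀ L : Submodule ℝ (Fin k → ℝ), Module.finrank ℝ L = 1 →
      ∑ i ∈ Finset.univ.filter (fun i => β i ∈ L), β i = 0)
    (ξ : (Fin k → ℝ) →ₗ[ℝ] ℝ) (hξ : ξ ≠ 0) :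
    {i | β i ∉ tangentConeFace β ξ} = {i | 0 < ξ (β i)} ∧
    (∑ i : Fin N,
        (if β i ∉ tangentConeFace β ξ then segment ℝ 0 (-(β i))
          else {y | ∃ t : ℝ, 0 ≤ t ∧ y = t • β i})) =
      tangentConeFace β ξ := by
  have hpart1 : ∀ i, (β i ∉ tangentConeFace β ξ ↔ 0 < ξ (β i)) :=
    fun i => notMem_cone_iff i
  constructor
  · ext i
    simp only [Set.mem_setOf_eq]
    exact hpart1 i
  · have hre : (∑ i : Fin N,
        (if β i ∉ tangentConeFace β ξ then segment ℝ 0 (-(β i))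
          else {y | ∃ t : ℝ, 0 ≤ t ∧ y = t • β i}))
        = ∑ i : Fin N, (if 0 < ξ (β i) then segment ℝ 0 (-(β i))
          else {y | ∃ t : ℝ, 0 ≤ t ∧ y = t • β i}) :=
      Finset.sum_congr rfl fun i _ => if_congr (hpart1 i) rfl rfl
    rw [hre, rhs_char, cone_char]
    exact (surgery hβ0 hqs).symm
end
end

section
/- Let n ≥ 1, let B = [0,∞)^n ⊆ ℝ^n be the closed nonnegative quadrant, and let C ⊆ ℝ^n be a closed convex set. Suppose that there exists x ∈ C with x_i ≤ 0 for all i, and that B ∩ C ≠ ∅. Then both B ∩ C and (∂B) ∩ C are nonempty contractible spaces, where ∂B = {x ∈ B : x_i = 0 for some i} is the topological boundary of B. -/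
open Pointwise

namespace QuadrantAux

variable {n : ℕ} [NeZero n]

/-- Parameter at which coordinate `i` of the segment from `x` to `y` crosses `0`. -/
noncomputable def ratio (x y : Fin n → ℝ) (i : Fin n) : ℝ :=
  if x i < 0 then (-x i) / (y i - x i) else 0

/-- Largest crossing parameter. -/
noncomputable def tstar (x y : Fin n → ℝ) : ℝ :=
  Finset.univ.sup' Finset.univ_nonempty (ratio x y)

/-- Point at parameter `a` on the segment from `x` to `y`. -/
noncomputable def seg (x : Fin n → ℝ) (a : ℝ) (y : Fin n → ℝ) : Fin n → ℝ :=
  fun i => x i + a * (y i - x i)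

variable {x y : Fin n → ℝ}

lemma ratio_nonneg (hx : ∀ i, x i ≤ 0) (hy : ∀ i, 0 ≤ y i) (i : Fin n) :
    0 ≤ ratio x y i := by
  unfold ratio
  split_ifs with h
  · exact div_nonneg (by linarith) (by linarith [hy i])
  · exact le_refl 0

lemma ratio_le_one (hy : ∀ i, 0 ≤ y i) (i : Fin n) : ratio x y i ≤ 1 := by
  unfold ratio
  split_ifs with h
  · rw [div_le_one (by linarith [hy i])]
    linarith [hy i]
  · exact zero_le_one

lemma ratio_le_tstar (i : Fin n) : ratio x y i ≤ tstar x y :=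
  Finset.le_sup' _ (Finset.mem_univ i)

lemma tstar_nonneg (hx : ∀ i, x i ≤ 0) (hy : ∀ i, 0 ≤ y i) : 0 ≤ tstar x y :=
  le_trans (ratio_nonneg hx hy (Classical.arbitrary _)) (ratio_le_tstar _)

lemma tstar_le_one (hy : ∀ i, 0 ≤ y i) : tstar x y ≤ 1 :=
  Finset.sup'_le _ _ fun i _ => ratio_le_one hy i

lemma seg_mem_B {a : ℝ} (hx : ∀ i, x i ≤ 0) (hy : ∀ i, 0 ≤ y i)
    (ha0 : 0 ≤ a) (hta : tstar x y ≤ a) : ∀ i, 0 ≤ seg x a y i := by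
  intro i
  unfold seg
  by_cases h : x i < 0
  · have hd : 0 < y i - x i := by linarith [hy i]
    have hr : (-x i) / (y i - x i) ≤ a := by
      have := le_trans (ratio_le_tstar (x := x) (y := y) i) hta
      rwa [ratio, if_pos h] at this
    rw [div_le_iff₀ hd] at hr
    nlinarith
  · have hxi : x i = 0 := le_antisymm (hx i) (not_lt.1 h)
    rw [hxi]
    have := mul_nonneg ha0 (by linarith [hy i] : (0:ℝ) ≤ y i - 0)
    linarith

lemma seg_mem_C {C : Set (Fin n → ℝ)} {a : ℝ} (hC : Convex ℝ C)
    (hxC : x ∈ C) (hyC : y ∈ C) (ha0 : 0 ≤ a) (ha1 : a ≤ 1) : seg x a y ∈ C := by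
  have h := hC hxC hyC (by linarith : (0:ℝ) ≤ 1 - a) ha0 (by ring)
  have heq : (1 - a) • x + a • y = seg x a y := by
    funext i
    simp only [Pi.add_apply, Pi.smul_apply, smul_eq_mul, seg]
    ring
  rwa [heq] at h

lemma seg_tstar_bdry (hx : ∀ i, x i ≤ 0) (hy : ∀ i, 0 ≤ y i) :
    ∃ j, seg x (tstar x y) y j = 0 := by
  obtain ⟨j, -, hj⟩ := Finset.exists_mem_eq_sup' (Finset.univ_nonempty) (ratio x y)
  have ht : tstar x y = ratio x y j := hj
  use j
  unfold seg
  by_cases h : x j < 0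
  · have hd : (0:ℝ) < y j - x j := by linarith [hy j]
    rw [ht, ratio, if_pos h, div_mul_cancel₀ _ hd.ne']
    ring
  · have hxj : x j = 0 := le_antisymm (hx j) (not_lt.1 h)
    have ht0 : tstar x y = 0 := by rw [ht, ratio, if_neg h]
    rw [ht0, hxj]
    ring

lemma seg_bdry {a : ℝ} {j : Fin n} (hx : ∀ i, x i ≤ 0) (hj : y j = 0)
    (hta : tstar x y ≤ a) (ha1 : a ≤ 1) : ∃ k, seg x a y k = 0 := by
  use j
  unfold seg
  rw [hj]
  by_cases h : x j < 0
  · have h1 : ratio x y j = 1 := by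
      rw [ratio, if_pos h, hj, zero_sub, neg_div_neg_eq, div_self h.ne]
    have ha : a = 1 := le_antisymm ha1 (le_trans (h1 ▸ ratio_le_tstar j) hta)
    rw [ha]; ring
  · have hxj : x j = 0 := le_antisymm (hx j) (not_lt.1 h)
    rw [hxj]; ring

lemma tstar_continuousOn (hx : ∀ i, x i ≤ 0) :
    ContinuousOn (tstar x) {y : Fin n → ℝ | ∀ i, 0 ≤ y i} := by
  have : ContinuousOn (fun y : Fin n → ℝ =>
      Finset.univ.sup' Finset.univ_nonempty (fun i => ratio x y i))
      {y : Fin n → ℝ | ∀ i, 0 ≤ y i} := by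
    apply ContinuousOn.finset_sup'_apply Finset.univ_nonempty
    intro i _
    by_cases h : x i < 0
    · simp only [ratio, if_pos h]
      apply ContinuousOn.div continuousOn_const
        ((continuous_apply i).sub continuous_const).continuousOn
      intro y hy
      have : (0:ℝ) ≤ y i := hy i
      intro hzero
      have : y i - x i = 0 := hzero
      linarith
    · simp only [ratio, if_neg h]
      exact continuousOn_const
  exact this

/-- The radial projection onto the boundary. -/
noncomputable def proj (x y : Fin n → ℝ) : Fin n → ℝ := seg x (tstar x y) y

lemma proj_continuousOn (hx : ∀ i, x i ≤ 0) :
    ContinuousOn (proj x) {y : Fin n → ℝ | ∀ i, 0 ≤ y i} := by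
  apply continuousOn_pi.2
  intro i
  show ContinuousOn (fun y => x i + tstar x y * (y i - x i)) _
  exact continuousOn_const.add ((tstar_continuousOn hx).mul
    (((continuous_apply i).continuousOn).sub continuousOn_const))

end QuadrantAux

open QuadrantAux in
/-- **Lemma.** Let `B = [0,∞)^n` and `C ⊆ ℝ^n` closed convex.  If `C` contains
a point with all coordinates `≤ 0` and `B ∩ C ≠ ∅`, then both `B ∩ C` and
`∂B ∩ C` are nonempty contractible spaces, where
`∂B = {x ∈ B : x_i = 0 for some i}`. -/
theorem quadrant_intersections_contractible
    {n : ℕ} (hn : 1 ≤ n)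
    (C : Set (Fin n → ℝ)) (hCclosed : IsClosed C) (hCconv : Convex ℝ C)
    (hx : ∃ x ∈ C, ∀ i, x i ≤ 0)
    (hBC : ({x : Fin n → ℝ | ∀ i, 0 ≤ x i} ∩ C).Nonempty) :
    ({x : Fin n → ℝ | ∀ i, 0 ≤ x i} ∩ C).Nonempty ∧
    ContractibleSpace ↥({x : Fin n → ℝ | ∀ i, 0 ≤ x i} ∩ C) ∧
    ({x : Fin n → ℝ | (∀ i, 0 ≤ x i) ∧ ∃ i, x i = 0} ∩ C).Nonempty ∧
    ContractibleSpace
      ↥({x : Fin n → ℝ | (∀ i, 0 ≤ x i) ∧ ∃ i, x i = 0} ∩ C) := by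
  haveI : NeZero n := ⟨by omega⟩
  obtain ⟨x, hxC, hxneg⟩ := hx
  obtain ⟨z, hzB, hzC⟩ := hBC
  have hzB' : ∀ i, 0 ≤ z i := hzB
  have hBconv : Convex ℝ {x : Fin n → ℝ | ∀ i, 0 ≤ x i} :=
    fun u hu v hv a b ha hb _ i => add_nonneg (mul_nonneg ha (hu i)) (mul_nonneg hb (hv i))
  -- the projected point of `z`
  set w : Fin n → ℝ := proj x z with hw
  have hwB : ∀ i, 0 ≤ w i :=
    seg_mem_B hxneg hzB' (tstar_nonneg hxneg hzB') le_rfl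
  have hwbd : ∃ j, w j = 0 := seg_tstar_bdry hxneg hzB'
  have hwC : w ∈ C :=
    seg_mem_C hCconv hxC hzC (tstar_nonneg hxneg hzB') (tstar_le_one hzB')
  refine ⟨⟨z, hzB, hzC⟩, (hBconv.inter hCconv).contractibleSpace ⟨z, hzB, hzC⟩,
    ⟨w, ⟨hwB, hwbd⟩, hwC⟩, ?_⟩
  set S := ({x : Fin n → ℝ | (∀ i, 0 ≤ x i) ∧ ∃ i, x i = 0} ∩ C) with hS
  rw [contractible_iff_id_nullhomotopic]
  -- basic facts about elements of S
  have memB : ∀ y : S, ∀ i, 0 ≤ y.1 i := fun y => y.2.1.1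
  have memC : ∀ y : S, y.1 ∈ C := fun y => y.2.2
  -- the projection map S → S
  have projS_mem : ∀ v : Fin n → ℝ, (∀ i, 0 ≤ v i) → v ∈ C → proj x v ∈ S := by
    intro v hvB hvC
    exact ⟨⟨seg_mem_B hxneg hvB (tstar_nonneg hxneg hvB) le_rfl,
      seg_tstar_bdry hxneg hvB⟩,
      seg_mem_C hCconv hxC hvC (tstar_nonneg hxneg hvB) (tstar_le_one hvB)⟩
  let pS : S → S := fun y => ⟨proj x y.1, projS_mem y.1 (memB y) (memC y)⟩
  have hpS : Continuous pS := by
    apply Continuous.subtype_mk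
    exact (proj_continuousOn hxneg).comp_continuous continuous_subtype_val
      (fun y => memB y)
  let pSc : C(S, S) := ⟨pS, hpS⟩
  -- first homotopy: identity to pS, along the segment
  let y₀ : S := ⟨w, ⟨hwB, hwbd⟩, hwC⟩
  have H1 : (ContinuousMap.id S).Homotopy pSc := by
    refine ⟨⟨fun q => ⟨seg x (1 - (q.1 : ℝ) * (1 - tstar x q.2.1)) q.2.1, ?_⟩, ?_⟩, ?_, ?_⟩
    · obtain ⟨s, y⟩ := q
      have ht0 : 0 ≤ tstar x y.1 := tstar_nonneg hxneg (memB y)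
      have ht1 : tstar x y.1 ≤ 1 := tstar_le_one (memB y)
      have hs0 : (0:ℝ) ≤ s := s.2.1
      have hs1 : (s:ℝ) ≤ 1 := s.2.2
      have hta : tstar x y.1 ≤ 1 - (s : ℝ) * (1 - tstar x y.1) := by nlinarith
      have ha1 : 1 - (s : ℝ) * (1 - tstar x y.1) ≤ 1 := by nlinarith
      have ha0 : 0 ≤ 1 - (s : ℝ) * (1 - tstar x y.1) := le_trans ht0 hta
      obtain ⟨j, hj⟩ := y.2.1.2
      exact ⟨⟨seg_mem_B hxneg (memB y) ha0 hta, seg_bdry hxneg hj hta ha1⟩,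
        seg_mem_C hCconv hxC (memC y) ha0 ha1⟩
    · apply Continuous.subtype_mk
      apply continuous_pi
      intro i
      show Continuous fun q : ↥unitInterval × S =>
        x i + (1 - (q.1 : ℝ) * (1 - tstar x q.2.1)) * (q.2.1 i - x i)
      have hs : Continuous fun q : ↥unitInterval × S => (q.1 : ℝ) :=
        continuous_subtype_val.comp continuous_fst
      have hT : Continuous fun q : ↥unitInterval × S => tstar x q.2.1 :=
        (tstar_continuousOn hxneg).comp_continuous
          (continuous_subtype_val.comp continuous_snd) (fun q => memB q.2)
      have hyi : Continuous fun q : ↥unitInterval × S => q.2.1 i :=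
        (continuous_apply i).comp (continuous_subtype_val.comp continuous_snd)
      exact continuous_const.add
        ((continuous_const.sub (hs.mul (continuous_const.sub hT))).mul
          (hyi.sub continuous_const))
    · intro y
      apply Subtype.ext
      show seg x (1 - ((0 : unitInterval) : ℝ) * (1 - tstar x y.1)) y.1 = y.1
      funext i
      simp only [seg, Set.Icc.coe_zero, zero_mul, sub_zero, one_mul]
      ring
    · intro y
      apply Subtype.ext
      show seg x (1 - ((1 : unitInterval) : ℝ) * (1 - tstar x y.1)) y.1 = proj x y.1
      simp only [Set.Icc.coe_one, one_mul, proj]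
      norm_num
  -- second homotopy: pS to the constant map, by sliding toward w and projecting
  have H2 : pSc.Homotopy (ContinuousMap.const S (pS y₀)) := by
    refine ⟨⟨fun q =>
      ⟨proj x (fun i => (1 - (q.1 : ℝ)) * q.2.1 i + (q.1 : ℝ) * w i), ?_⟩, ?_⟩, ?_, ?_⟩
    · obtain ⟨s, y⟩ := q
      have hs0 : (0:ℝ) ≤ s := s.2.1
      have hs1 : (s:ℝ) ≤ 1 := s.2.2
      have hvB : ∀ i, 0 ≤ (1 - (s : ℝ)) * y.1 i + (s : ℝ) * w i := fun i =>
        add_nonneg (mul_nonneg (by linarith) (memB y i)) (mul_nonneg hs0 (hwB i))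
      have hvC : (fun i => (1 - (s : ℝ)) * y.1 i + (s : ℝ) * w i) ∈ C := by
        have := hCconv (memC y) hwC (by linarith : (0:ℝ) ≤ 1 - s) hs0 (by ring)
        exact this
      exact projS_mem _ hvB hvC
    · apply Continuous.subtype_mk
      have hmix : Continuous fun q : ↥unitInterval × S =>
          (fun i => (1 - (q.1 : ℝ)) * q.2.1 i + (q.1 : ℝ) * w i) := by
        apply continuous_pi
        intro i
        have hs : Continuous fun q : ↥unitInterval × S => (q.1 : ℝ) :=
          continuous_subtype_val.comp continuous_fst
        have hyi : Continuous fun q : ↥unitInterval × S => q.2.1 i :=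
          (continuous_apply i).comp (continuous_subtype_val.comp continuous_snd)
        exact ((continuous_const.sub hs).mul hyi).add (hs.mul continuous_const)
      apply (proj_continuousOn hxneg).comp_continuous hmix
      intro q i
      obtain ⟨s, y⟩ := q
      have hs0 : (0:ℝ) ≤ s := s.2.1
      have hs1 : (s:ℝ) ≤ 1 := s.2.2
      exact add_nonneg (mul_nonneg (by linarith) (memB y i)) (mul_nonneg hs0 (hwB i))
    · intro y
      apply Subtype.ext
      show proj x (fun i => (1 - ((0 : unitInterval) : ℝ)) * y.1 i
        + ((0 : unitInterval) : ℝ) * w i) = proj x y.1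
      congr 1
      funext i
      simp
    · intro y
      apply Subtype.ext
      show proj x (fun i => (1 - ((1 : unitInterval) : ℝ)) * y.1 i
        + ((1 : unitInterval) : ℝ) * w i) = proj x w
      congr 1
      funext i
      simp
  exact ⟨pS y₀, ⟨H1.trans H2⟩⟩
end
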